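/- arXiv:1104.4680 — 10 statements merged into one kernel-verified Lean document; each statement's English description precedes it below -/
import Mathlib

section
/- Let A be a symmetric doubly stochastic n×n real matrix (the normalized adjacency matrix of a regular weighted graph G on vertex set V = [n]) with eigenvalues λ₁ ≥ … ≥ λₙ, and let 1 ≤ m ≤ n be an integer and ε ≥ 0 a real with λ_m ≥ 1 − ε. Then there exist vectors v₁, …, vₙ ∈ ℝ^m such that E_{ij∼G} ⟨v_i, v_j⟩ ≥ 1 − ε, E_{i,j∈V} ⟨v_i, v_j⟩² = 1/m, and E_{i∈V} ‖v_i‖² = 1. -/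
open Finset RealInnerProductSpace

noncomputable section

/-- The number of eigenvalues of a Hermitian (symmetric real) matrix that are
at least `τ`, counted with multiplicity. -/
def rankGe {n : ℕ} {A : Matrix (Fin n) (Fin n) ℝ} (hA : A.IsHermitian) (τ : ℝ) : ℕ :=
  (Finset.univ.filter (fun r => τ ≤ hA.eigenvalues r)).card

private lemma sum_rot {M : Type*} [AddCommMonoid M] {a b c : ℕ}
    (f : Fin a → Fin b → Fin c → M) :
    ∑ i, ∑ j, ∑ k, f i j k = ∑ k, ∑ i, ∑ j, f i j k := by
  rw [show (∑ i, ∑ j, ∑ k, f i j k) = ∑ i, ∑ k, ∑ j, f i j k from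
    Finset.sum_congr rfl fun i _ => Finset.sum_comm, Finset.sum_comm]

/-- If the normalized adjacency matrix `A` of a regular weighted graph
(symmetric, doubly stochastic) has at least `m` eigenvalues that are at least `1 - ε`
(i.e. `λ_m ≥ 1 - ε` in non-increasing order), then there are vectors `v₁, …, vₙ ∈ ℝ^m`
with `E_{ij∼G} ⟨v_i, v_j⟩ ≥ 1 - ε`, `E_{i,j∈V} ⟨v_i, v_j⟩² = 1/m` and
`E_{i∈V} ‖v_i‖² = 1`. -/
theorem stmt_1 {n : ℕ} (hn : 0 < n)
    (A : Matrix (Fin n) (Fin n) ℝ) (hA : A.IsHermitian)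
    (hnonneg : ∀ i j, 0 ≤ A i j) (hrow : ∀ i, ∑ j, A i j = 1)
    (m : ℕ) (hm1 : 1 ≤ m) (hmn : m ≤ n) (ε : ℝ) (hε : 0 ≤ ε)
    (hlam : m ≤ rankGe hA (1 - ε)) :
    ∃ v : Fin n → EuclideanSpace ℝ (Fin m),
      1 - ε ≤ (1 / (n : ℝ)) * ∑ i, ∑ j, A i j * ⟪v i, v j⟫ ∧
      (1 / (n : ℝ) ^ 2) * ∑ i, ∑ j, (⟪v i, v j⟫ : ℝ) ^ 2 = 1 / (m : ℝ) ∧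
      (1 / (n : ℝ)) * ∑ i, ‖v i‖ ^ 2 = 1 := by
  classical
  have hn' : (0:ℝ) < n := by exact_mod_cast hn
  have hm' : (0:ℝ) < m := by exact_mod_cast hm1
  obtain ⟨T, hTS, hTcard⟩ := Finset.exists_subset_card_eq hlam
  set B : Fin n → EuclideanSpace ℝ (Fin n) := fun k => hA.eigenvectorBasis k with hB
  set e : Fin m → Fin n := fun k => (T.orderIsoOfFin hTcard k : Fin n) with he
  have heinj : Function.Injective e := fun a b h => by
    simpa using (T.orderIsoOfFin hTcard).injective (Subtype.coe_injective h)
  have hein : ∀ {a b : Fin m}, e a = e b → b = a := fun h => (heinj h).symm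
  have heS : ∀ k, 1 - ε ≤ hA.eigenvalues (e k) := by
    intro k
    have h1 : e k ∈ T := (T.orderIsoOfFin hTcard k).2
    have h2 := hTS h1
    simpa using (Finset.mem_filter.mp h2).2
  set c : ℝ := Real.sqrt ((n : ℝ) / m) with hc
  have hc2 : c * c = (n : ℝ) / m := Real.mul_self_sqrt (by positivity)
  set v : Fin n → EuclideanSpace ℝ (Fin m) := fun i => WithLp.toLp 2 (fun k => c * B (e k) i) with hv
  have horth : ∀ k l : Fin n, ∑ i, B k i * B l i = if k = l then 1 else 0 := by
    intro k l
    have h := (orthonormal_iff_ite.mp hA.eigenvectorBasis.orthonormal) k l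
    simpa [PiLp.inner_apply, RCLike.inner_apply, hB, mul_comm] using h
  have hinner : ∀ i j, (⟪v i, v j⟫ : ℝ) = ∑ k, (c * B (e k) i) * (c * B (e k) j) := by
    intro i j
    simp [PiLp.inner_apply, RCLike.inner_apply, hv, mul_comm]
  have heig : ∀ k : Fin n, ∑ i, ∑ j, A i j * (B k i * B k j) = hA.eigenvalues k := by
    intro k
    have hmv := hA.mulVec_eigenvectorBasis k
    have h1 : ∀ i, (A.mulVec (B k)) i = hA.eigenvalues k * B k i := fun i =>
      congrFun hmv i
    calc ∑ i, ∑ j, A i j * (B k i * B k j)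
        = ∑ i, B k i * (A.mulVec (B k)) i := by
          refine Finset.sum_congr rfl fun i _ => ?_
          simp only [Matrix.mulVec, dotProduct, Finset.mul_sum]
          exact Finset.sum_congr rfl fun j _ => by ring
      _ = hA.eigenvalues k * ∑ i, B k i * B k i := by
          rw [Finset.mul_sum]
          exact Finset.sum_congr rfl fun i _ => by rw [h1 i]; ring
      _ = hA.eigenvalues k := by rw [horth]; simp
  refine ⟨v, ?_, ?_, ?_⟩
  · -- edge expectation
    have key : ∑ i, ∑ j, A i j * ⟪v i, v j⟫ = ((n:ℝ)/m) * ∑ k, hA.eigenvalues (e k) := by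
      calc ∑ i, ∑ j, A i j * ⟪v i, v j⟫
          = ∑ i, ∑ j, ∑ k, (c*c) * (A i j * (B (e k) i * B (e k) j)) := by
            refine Finset.sum_congr rfl fun i _ => Finset.sum_congr rfl fun j _ => ?_
            rw [hinner, Finset.mul_sum]
            exact Finset.sum_congr rfl fun k _ => by ring
        _ = ∑ k, ∑ i, ∑ j, (c*c) * (A i j * (B (e k) i * B (e k) j)) := sum_rot _
        _ = ∑ k, (c*c) * ∑ i, ∑ j, A i j * (B (e k) i * B (e k) j) := by
            refine Finset.sum_congr rfl fun k _ => ?_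
            simp [Finset.mul_sum]
        _ = ((n:ℝ)/m) * ∑ k, hA.eigenvalues (e k) := by
            rw [Finset.mul_sum]
            exact Finset.sum_congr rfl fun k _ => by rw [heig, hc2]
    rw [key]
    have hsum : (m : ℝ) * (1 - ε) ≤ ∑ k, hA.eigenvalues (e k) := by
      calc (m:ℝ) * (1-ε) = ∑ _k : Fin m, (1-ε) := by simp [mul_comm]; ring
        _ ≤ ∑ k, hA.eigenvalues (e k) := Finset.sum_le_sum fun k _ => heS k
    calc 1 - ε = (1/(n:ℝ)) * (((n:ℝ)/m) * ((m:ℝ)*(1-ε))) := by field_simp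
      _ ≤ (1/(n:ℝ)) * (((n:ℝ)/m) * ∑ k, hA.eigenvalues (e k)) := by
          apply mul_le_mul_of_nonneg_left _ (by positivity)
          exact mul_le_mul_of_nonneg_left hsum (by positivity)
  · -- second moment
    have key : ∑ i, ∑ j, (⟪v i, v j⟫ : ℝ)^2 = ((c*c)*(c*c)) * m := by
      calc ∑ i, ∑ j, (⟪v i, v j⟫ : ℝ)^2
          = ∑ i, ∑ j, ∑ k, ∑ l, ((c*c)*(c*c)) *
              ((B (e k) i * B (e l) i) * (B (e k) j * B (e l) j)) := by
            refine Finset.sum_congr rfl fun i _ => Finset.sum_congr rfl fun j _ => ?_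
            rw [hinner, sq, Finset.sum_mul_sum]
            exact Finset.sum_congr rfl fun k _ => Finset.sum_congr rfl fun l _ => by ring
        _ = ∑ k, ∑ i, ∑ j, ∑ l, ((c*c)*(c*c)) *
              ((B (e k) i * B (e l) i) * (B (e k) j * B (e l) j)) := sum_rot _
        _ = ∑ k, ∑ l, ∑ i, ∑ j, ((c*c)*(c*c)) *
              ((B (e k) i * B (e l) i) * (B (e k) j * B (e l) j)) := by
            refine Finset.sum_congr rfl fun k _ => ?_
            exact sum_rot (fun i j l => ((c*c)*(c*c)) *
              ((B (e k) i * B (e l) i) * (B (e k) j * B (e l) j)))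
        _ = ∑ k, ∑ l, ((c*c)*(c*c)) *
              ((∑ i, B (e k) i * B (e l) i) * (∑ j, B (e k) j * B (e l) j)) := by
            refine Finset.sum_congr rfl fun k _ => Finset.sum_congr rfl fun l _ => ?_
            rw [Finset.sum_mul_sum, Finset.mul_sum]
            refine Finset.sum_congr rfl fun i _ => ?_
            rw [Finset.mul_sum]
        _ = ∑ _k : Fin m, ((c*c)*(c*c)) := by
            refine Finset.sum_congr rfl fun k _ => ?_
            rw [Finset.sum_eq_single k]
            · rw [horth, if_pos rfl]; ring
            · intro l _ hlk
              rw [horth, if_neg (fun h => hlk (hein h))]; ring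
            · simp
        _ = ((c*c)*(c*c)) * m := by
            rw [Finset.sum_const, Finset.card_univ, Fintype.card_fin]
            simp [mul_comm]
    rw [key, hc2]
    field_simp
  · -- norms
    have key : ∑ i, ‖v i‖^2 = (n:ℝ) := by
      have hns : ∀ i, ‖v i‖^2 = (⟪v i, v i⟫ : ℝ) := fun i =>
        (real_inner_self_eq_norm_sq _).symm
      calc ∑ i, ‖v i‖^2 = ∑ i, ∑ k, (c*c) * (B (e k) i * B (e k) i) := by
            refine Finset.sum_congr rfl fun i _ => ?_
            rw [hns, hinner]
            exact Finset.sum_congr rfl fun k _ => by ring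
        _ = ∑ k : Fin m, (c*c) * ∑ i, B (e k) i * B (e k) i := by
            rw [Finset.sum_comm]
            exact Finset.sum_congr rfl fun k _ => by rw [Finset.mul_sum]
        _ = ∑ _k : Fin m, (c*c) := by
            refine Finset.sum_congr rfl fun k _ => ?_
            rw [horth, if_pos rfl, mul_one]
        _ = (n:ℝ) := by
            rw [Finset.sum_const, Finset.card_univ, Fintype.card_fin, nsmul_eq_mul, hc2]
            field_simp
    rw [key]; field_simp

end
end

section
/- Let X_i and X_j be jointly distributed random variables with values in [k] = {1, …, k} on a finite probability space, and suppose Var X_{jb} > 0 for every b ∈ [k]. Then Var X_i − E_{{X_j}} Var[X_i | X_j] ≥ (1/k) · Σ_{a,b∈[k]} Cov(X_{ia}, X_{jb})² / Var X_{jb}. -/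
open Finset

noncomputable section

variable {Ω : Type*} [Fintype Ω]

/-- Expectation of a real random variable `f` under the weight function `p`. -/
def pExp (p : Ω → ℝ) (f : Ω → ℝ) : ℝ := ∑ ω, p ω * f ω

/-- Probability of the event `E` under the weight function `p`. -/
def pProb (p : Ω → ℝ) (E : Ω → Prop) [DecidablePred E] : ℝ := ∑ ω, if E ω then p ω else 0

/-- Variance of a real random variable under `p`. -/
def pVar (p : Ω → ℝ) (f : Ω → ℝ) : ℝ := pExp p (fun ω => (f ω - pExp p f) ^ 2)

/-- Covariance of two real random variables under `p`. -/
def pCov (p : Ω → ℝ) (f g : Ω → ℝ) : ℝ :=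
  pExp p (fun ω => (f ω - pExp p f) * (g ω - pExp p g))

/-- The measure `p` conditioned on the event `E`. -/
def pCond (p : Ω → ℝ) (E : Ω → Prop) [DecidablePred E] : Ω → ℝ :=
  fun ω => if E ω then p ω / pProb p E else 0

/-- The `{0,1}`-indicator of the event `X = a`. -/
def pInd {k : ℕ} (X : Ω → Fin k) (a : Fin k) : Ω → ℝ := fun ω => if X ω = a then 1 else 0

/-- The variance of a `[k]`-valued random variable, `Var X = Σ_a Var X_a`. -/
def pVarK (p : Ω → ℝ) {k : ℕ} (X : Ω → Fin k) : ℝ := ∑ a, pVar p (pInd X a)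

/-- `E_{{Y}} Var[f | Y]`: the expectation over the distribution of `Y` of the variance of
the real random variable `f` conditioned on the value of `Y`. -/
def pCondVar (p : Ω → ℝ) (f : Ω → ℝ) {β : Type*} [DecidableEq β] (Y : Ω → β) : ℝ :=
  ∑ y ∈ Finset.univ.image Y,
    if 0 < pProb p (fun ω => Y ω = y)
    then pProb p (fun ω => Y ω = y) * pVar (pCond p (fun ω => Y ω = y)) f
    else 0

/-- `E_{{Y}} Var[X | Y]` for a `[k]`-valued random variable `X`, where
`Var X = Σ_a Var X_a`. -/
def pCondVarK (p : Ω → ℝ) {k : ℕ} (X : Ω → Fin k) {β : Type*} [DecidableEq β] (Y : Ω → β) : ℝ :=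
  ∑ a, pCondVar p (pInd X a) Y

namespace Stmt4Aux

variable {β : Type*} [DecidableEq β]

lemma pProb_nonneg (p : Ω → ℝ) (hp : ∀ ω, 0 ≤ p ω) (E : Ω → Prop) [DecidablePred E] :
    0 ≤ pProb p E :=
  Finset.sum_nonneg fun ω _ => by by_cases h : E ω <;> simp [h, hp ω]

lemma key (p : Ω → ℝ) (hp : ∀ ω, 0 ≤ p ω) (E : Ω → Prop) [DecidablePred E] (ω : Ω) :
    pProb p E * pCond p E ω = if E ω then p ω else 0 := by
  unfold pCond
  by_cases hE : E ω
  · simp only [hE, if_true]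
    rcases eq_or_lt_of_le (pProb_nonneg p hp E) with h | h
    · have hz : p ω = 0 := by
        have := (Finset.sum_eq_zero_iff_of_nonneg
          (fun ω' _ => by by_cases h' : E ω' <;> simp [h', hp ω'])).mp h.symm ω (Finset.mem_univ ω)
        simpa [hE] using this
      simp [← h, hz]
    · field_simp
  · simp [hE]

lemma key2 (p : Ω → ℝ) (hp : ∀ ω, 0 ≤ p ω) (E : Ω → Prop) [DecidablePred E] (f : Ω → ℝ) :
    pProb p E * pExp (pCond p E) f = ∑ ω, (if E ω then p ω else 0) * f ω := by
  unfold pExp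
  rw [Finset.mul_sum]
  exact Finset.sum_congr rfl fun ω _ => by rw [← mul_assoc, key p hp E ω]

/-- Partition of a Y-measurable expectation. -/
lemma master (p : Ω → ℝ) (hp : ∀ ω, 0 ≤ p ω) (Y : Ω → β) (c : β → ℝ) :
    ∑ y ∈ Finset.univ.image Y, pProb p (fun ω => Y ω = y) * c y = ∑ ω, p ω * c (Y ω) := by
  unfold pProb
  simp only [Finset.sum_mul, ite_mul, zero_mul]
  rw [Finset.sum_comm]
  refine Finset.sum_congr rfl fun ω _ => ?_
  rw [Finset.sum_ite_eq (Finset.univ.image Y) (Y ω) (fun y => p ω * c y)]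
  simp

lemma L2 (p : Ω → ℝ) (hp : ∀ ω, 0 ≤ p ω) (Y : Ω → β) (f : Ω → ℝ) (c : β → ℝ) :
    ∑ y ∈ Finset.univ.image Y,
        c y * (pProb p (fun ω => Y ω = y) * pExp (pCond p (fun ω => Y ω = y)) f)
      = ∑ ω, p ω * (f ω * c (Y ω)) := by
  have := fun y => key2 p hp (fun ω => Y ω = y) f
  simp only [this]
  simp only [Finset.mul_sum, ite_mul, zero_mul, mul_ite, mul_zero]
  rw [Finset.sum_comm]
  refine Finset.sum_congr rfl fun ω _ => ?_
  rw [Finset.sum_ite_eq (Finset.univ.image Y) (Y ω) (fun y => c y * (p ω * f ω))]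
  simp [mul_comm, mul_left_comm]

lemma pVar_expand (q : Ω → ℝ) (hq1 : ∑ ω, q ω = 1) (f : Ω → ℝ) :
    pVar q f = pExp q (fun ω => f ω * f ω) - (pExp q f) ^ 2 := by
  unfold pVar pExp
  have h : ∀ ω, q ω * (f ω - ∑ ω', q ω' * f ω') ^ 2
      = q ω * (f ω * f ω) - 2 * (∑ ω', q ω' * f ω') * (q ω * f ω)
        + (∑ ω', q ω' * f ω') ^ 2 * q ω := fun ω => by ring
  rw [Finset.sum_congr rfl fun ω _ => h ω]
  rw [Finset.sum_add_distrib, Finset.sum_sub_distrib, ← Finset.mul_sum, ← Finset.mul_sum, hq1]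
  ring

lemma pCov_expand (q : Ω → ℝ) (hq1 : ∑ ω, q ω = 1) (f g : Ω → ℝ) :
    pCov q f g = pExp q (fun ω => f ω * g ω) - pExp q f * pExp q g := by
  unfold pCov pExp
  have h : ∀ ω, q ω * ((f ω - ∑ ω', q ω' * f ω') * (g ω - ∑ ω', q ω' * g ω'))
      = q ω * (f ω * g ω) - (∑ ω', q ω' * g ω') * (q ω * f ω)
        - (∑ ω', q ω' * f ω') * (q ω * g ω)
        + ((∑ ω', q ω' * f ω') * (∑ ω', q ω' * g ω')) * q ω := fun ω => by ring
  rw [Finset.sum_congr rfl fun ω _ => h ω]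
  rw [Finset.sum_add_distrib, Finset.sum_sub_distrib, Finset.sum_sub_distrib,
    ← Finset.mul_sum, ← Finset.mul_sum, ← Finset.mul_sum, hq1]
  ring

/-- conditional expectation as a function of ω -/
def gfun (p : Ω → ℝ) (f : Ω → ℝ) (Y : Ω → β) : Ω → ℝ :=
  fun ω => pExp (pCond p (fun ω' => Y ω' = Y ω)) f

lemma pCond_sum_one (p : Ω → ℝ) (hp : ∀ ω, 0 ≤ p ω) (E : Ω → Prop) [DecidablePred E]
    (hpos : 0 < pProb p E) : ∑ ω, pCond p E ω = 1 := by
  unfold pCond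
  have h : (∑ ω, if E ω then p ω / pProb p E else 0)
      = (∑ ω, if E ω then p ω else 0) / pProb p E := by
    rw [Finset.sum_div]
    exact Finset.sum_congr rfl fun ω _ => by by_cases hE : E ω <;> simp [hE]
  rw [h]
  exact div_self hpos.ne'


lemma pCond_zero (p : Ω → ℝ) (E : Ω → Prop) [DecidablePred E]
    (hz : pProb p E = 0) : pCond p E = fun _ => 0 := by
  funext ω
  unfold pCond
  rw [hz]
  simp

/-- Law of total variance. -/
lemma ltv (p : Ω → ℝ) (hp : ∀ ω, 0 ≤ p ω) (hsum : ∑ ω, p ω = 1) (Y : Ω → β) (f : Ω → ℝ) :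
    pVar p f - pCondVar p f Y = pVar p (gfun p f Y) := by
  set G : β → ℝ := fun y => pExp (pCond p (fun ω' => Y ω' = y)) f with hG
  have hcv : pCondVar p f Y
      = ∑ y ∈ Finset.univ.image Y,
          (pProb p (fun ω => Y ω = y) * pExp (pCond p (fun ω => Y ω = y)) (fun ω => f ω * f ω)
            - pProb p (fun ω => Y ω = y) * (G y) ^ 2) := by
    unfold pCondVar
    refine Finset.sum_congr rfl fun y _ => ?_
    by_cases hpos : 0 < pProb p (fun ω => Y ω = y)
    · rw [if_pos hpos, pVar_expand _ (pCond_sum_one p hp _ hpos) f]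
      ring
    · have hz : pProb p (fun ω => Y ω = y) = 0 :=
        le_antisymm (not_lt.mp hpos) (pProb_nonneg p hp _)
      rw [if_neg hpos, hz]
      ring
  have h1 : ∑ y ∈ Finset.univ.image Y,
      pProb p (fun ω => Y ω = y) * pExp (pCond p (fun ω => Y ω = y)) (fun ω => f ω * f ω)
      = pExp p (fun ω => f ω * f ω) := by
    have := L2 p hp Y (fun ω => f ω * f ω) (fun _ => 1)
    simp only [one_mul, mul_one] at this
    rw [this]; rfl
  have h2 : ∑ y ∈ Finset.univ.image Y, pProb p (fun ω => Y ω = y) * G y = pExp p f := by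
    have := L2 p hp Y f (fun _ => 1)
    simp only [one_mul, mul_one] at this
    rw [show (∑ y ∈ Finset.univ.image Y, pProb p (fun ω => Y ω = y) * G y)
        = ∑ y ∈ Finset.univ.image Y,
            pProb p (fun ω => Y ω = y) * pExp (pCond p (fun ω => Y ω = y)) f from rfl, this]
    rfl
  have hgexp : pExp p (gfun p f Y) = pExp p f := by
    have e1 : pExp p (gfun p f Y) = ∑ ω, p ω * G (Y ω) := rfl
    rw [e1, ← master p hp Y G, h2]
  have hgsq : pExp p (fun ω => gfun p f Y ω * gfun p f Y ω)
      = ∑ y ∈ Finset.univ.image Y, pProb p (fun ω => Y ω = y) * (G y) ^ 2 := by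
    have e1 : pExp p (fun ω => gfun p f Y ω * gfun p f Y ω)
        = ∑ ω, p ω * (G (Y ω) * G (Y ω)) := rfl
    rw [e1, ← master p hp Y (fun y => G y * G y)]
    exact Finset.sum_congr rfl fun y _ => by ring
  rw [pVar_expand p hsum f, pVar_expand p hsum (gfun p f Y), hcv, Finset.sum_sub_distrib,
    h1, hgsq, hgexp]
  ring

/-- Cov of f with a Y-measurable function equals Cov of the conditional expectation. -/
lemma cov_eq (p : Ω → ℝ) (hp : ∀ ω, 0 ≤ p ω) (hsum : ∑ ω, p ω = 1) (Y : Ω → β)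
    (f : Ω → ℝ) (c : β → ℝ) :
    pCov p f (fun ω => c (Y ω)) = pCov p (gfun p f Y) (fun ω => c (Y ω)) := by
  set G : β → ℝ := fun y => pExp (pCond p (fun ω' => Y ω' = y)) f with hG
  have hgexp : pExp p (gfun p f Y) = pExp p f := by
    have hl := L2 p hp Y f (fun _ => 1)
    simp only [one_mul, mul_one] at hl
    have e1 : pExp p (gfun p f Y) = ∑ ω, p ω * G (Y ω) := rfl
    rw [e1, ← master p hp Y G, hl]; rfl
  have hfc : pExp p (fun ω => f ω * c (Y ω))
      = ∑ y ∈ Finset.univ.image Y, pProb p (fun ω => Y ω = y) * (G y * c y) := by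
    have := L2 p hp Y f c
    rw [show pExp p (fun ω => f ω * c (Y ω)) = ∑ ω, p ω * (f ω * c (Y ω)) from rfl, ← this]
    exact Finset.sum_congr rfl fun y _ => by ring
  have hgc : pExp p (fun ω => gfun p f Y ω * c (Y ω))
      = ∑ y ∈ Finset.univ.image Y, pProb p (fun ω => Y ω = y) * (G y * c y) := by
    have e1 : pExp p (fun ω => gfun p f Y ω * c (Y ω))
        = ∑ ω, p ω * (G (Y ω) * c (Y ω)) := rfl
    rw [e1, ← master p hp Y (fun y => G y * c y)]
  rw [pCov_expand p hsum, pCov_expand p hsum, hfc, ← hgc, hgexp]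

/-- Cauchy–Schwarz for covariance. -/
lemma cov_sq_le (p : Ω → ℝ) (hp : ∀ ω, 0 ≤ p ω) (f g : Ω → ℝ) :
    pCov p f g ^ 2 ≤ pVar p f * pVar p g := by
  unfold pCov pVar pExp
  set mf := ∑ ω, p ω * f ω
  set mg := ∑ ω, p ω * g ω
  have h := Finset.sum_mul_sq_le_sq_mul_sq Finset.univ
    (fun ω => Real.sqrt (p ω) * (f ω - mf)) (fun ω => Real.sqrt (p ω) * (g ω - mg))
  calc (∑ ω, p ω * ((f ω - mf) * (g ω - mg))) ^ 2
      = (∑ ω, (Real.sqrt (p ω) * (f ω - mf)) * (Real.sqrt (p ω) * (g ω - mg))) ^ 2 := by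
        congr 1
        refine Finset.sum_congr rfl fun ω _ => ?_
        rw [show (Real.sqrt (p ω) * (f ω - mf)) * (Real.sqrt (p ω) * (g ω - mg))
            = (Real.sqrt (p ω) * Real.sqrt (p ω)) * ((f ω - mf) * (g ω - mg)) by ring,
          Real.mul_self_sqrt (hp ω)]
    _ ≤ (∑ ω, (Real.sqrt (p ω) * (f ω - mf)) ^ 2) * ∑ ω, (Real.sqrt (p ω) * (g ω - mg)) ^ 2 := h
    _ = (∑ ω, p ω * (f ω - mf) ^ 2) * ∑ ω, p ω * (g ω - mg) ^ 2 := by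
        congr 1 <;> refine Finset.sum_congr rfl fun ω _ => ?_ <;>
          rw [mul_pow, Real.sq_sqrt (hp ω)]

end Stmt4Aux

/-- Conditioning on `X_j` decreases the variance of `X_i` by at least
`(1/k) · Σ_{a,b} Cov(X_{ia}, X_{jb})² / Var X_{jb}`. -/
theorem stmt_4 {Ω : Type*} [Fintype Ω] (p : Ω → ℝ)
    (hp : ∀ ω, 0 ≤ p ω) (hsum : ∑ ω, p ω = 1)
    (k : ℕ) (Xi Xj : Ω → Fin k)
    (hvar : ∀ b : Fin k, 0 < pVar p (pInd Xj b)) :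
    (1 / (k : ℝ)) * ∑ a : Fin k, ∑ b : Fin k,
        pCov p (pInd Xi a) (pInd Xj b) ^ 2 / pVar p (pInd Xj b) ≤
      pVarK p Xi - pCondVarK p Xi Xj := by
  classical
  rcases Nat.eq_zero_or_pos k with hk | hk
  · subst hk
    simp [pVarK, pCondVarK]
  set g : Fin k → Ω → ℝ := fun a => Stmt4Aux.gfun p (pInd Xi a) Xj with hg
  have hbound : ∀ a b, pCov p (pInd Xi a) (pInd Xj b) ^ 2 / pVar p (pInd Xj b)
      ≤ pVar p (g a) := by
    intro a b
    have hcov : pCov p (pInd Xi a) (pInd Xj b) = pCov p (g a) (pInd Xj b) := by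
      have := Stmt4Aux.cov_eq p hp hsum Xj (pInd Xi a) (fun y => if y = b then (1:ℝ) else 0)
      exact this
    rw [hcov, div_le_iff₀ (hvar b)]
    exact Stmt4Aux.cov_sq_le p hp (g a) (pInd Xj b)
  have hsumb : ∀ a, ∑ b : Fin k, pCov p (pInd Xi a) (pInd Xj b) ^ 2 / pVar p (pInd Xj b)
      ≤ (k : ℝ) * pVar p (g a) := by
    intro a
    calc ∑ b : Fin k, pCov p (pInd Xi a) (pInd Xj b) ^ 2 / pVar p (pInd Xj b)
        ≤ ∑ _b : Fin k, pVar p (g a) := Finset.sum_le_sum fun b _ => hbound a b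
      _ = (k : ℝ) * pVar p (g a) := by simp [mul_comm]
  have hrhs : pVarK p Xi - pCondVarK p Xi Xj = ∑ a, pVar p (g a) := by
    unfold pVarK pCondVarK
    rw [← Finset.sum_sub_distrib]
    exact Finset.sum_congr rfl fun a _ => Stmt4Aux.ltv p hp hsum Xj (pInd Xi a)
  rw [hrhs]
  have hkpos : (0:ℝ) < (k:ℝ) := by exact_mod_cast hk
  calc (1 / (k : ℝ)) * ∑ a : Fin k, ∑ b : Fin k,
        pCov p (pInd Xi a) (pInd Xj b) ^ 2 / pVar p (pInd Xj b)
      ≤ (1 / (k : ℝ)) * ∑ a : Fin k, (k : ℝ) * pVar p (g a) := by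
        apply mul_le_mul_of_nonneg_left _ (by positivity)
        exact Finset.sum_le_sum fun a _ => hsumb a
    _ = ∑ a, pVar p (g a) := by
        rw [← Finset.mul_sum]
        field_simp
end
end

section
/- Let X₁, …, Xₙ be jointly distributed random variables with values in [k] = {1, …, k} on a finite probability space, and suppose Var X_{ia} > 0 for all i ∈ [n] and a ∈ [k]. Then there exist vectors v₁, …, vₙ in a real inner product space with ‖v_i‖ ≤ 1 for all i, such that for all i, j ∈ [n]: (1/k²)·(Σ_{(a,b)∈[k]²} |Cov(X_{ia}, X_{jb})|)² ≤ ⟨v_i, v_j⟩ ≤ (1/k)·Σ_{(a,b)∈[k]²} (1/2)·(1/Var X_{ia} + 1/Var X_{jb})·Cov(X_{ia}, X_{jb})². -/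
open Finset RealInnerProductSpace

noncomputable section

variable {Ω : Type*} [Fintype Ω]

open Matrix

/- ### Auxiliary lemmas -/

lemma pExp_nonneg (p : Ω → ℝ) (hp : ∀ ω, 0 ≤ p ω) (f : Ω → ℝ) (hf : ∀ ω, 0 ≤ f ω) :
    0 ≤ pExp p f := Finset.sum_nonneg fun ω _ => mul_nonneg (hp ω) (hf ω)

lemma pVar_nonneg (p : Ω → ℝ) (hp : ∀ ω, 0 ≤ p ω) (f : Ω → ℝ) : 0 ≤ pVar p f :=
  pExp_nonneg p hp _ fun ω => sq_nonneg _

/-- Cauchy–Schwarz for covariance. -/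
lemma pCov_sq_le (p : Ω → ℝ) (hp : ∀ ω, 0 ≤ p ω) (f g : Ω → ℝ) :
    pCov p f g ^ 2 ≤ pVar p f * pVar p g := by
  have key : ∀ h₁ h₂ : Ω → ℝ, ∀ ω, p ω * (h₁ ω * h₂ ω)
      = (Real.sqrt (p ω) * h₁ ω) * (Real.sqrt (p ω) * h₂ ω) := by
    intro h₁ h₂ ω
    rw [show (Real.sqrt (p ω) * h₁ ω) * (Real.sqrt (p ω) * h₂ ω)
        = (Real.sqrt (p ω) * Real.sqrt (p ω)) * (h₁ ω * h₂ ω) by ring,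
      Real.mul_self_sqrt (hp ω)]
  have h := Finset.sum_mul_sq_le_sq_mul_sq Finset.univ
      (fun ω => Real.sqrt (p ω) * (f ω - pExp p f))
      (fun ω => Real.sqrt (p ω) * (g ω - pExp p g))
  calc pCov p f g ^ 2
      = (∑ ω, (Real.sqrt (p ω) * (f ω - pExp p f)) * (Real.sqrt (p ω) * (g ω - pExp p g))) ^ 2 := by
        unfold pCov pExp
        congr 1
        exact Finset.sum_congr rfl fun ω _ =>
          key (fun ω => f ω - pExp p f) (fun ω => g ω - pExp p g) ω
    _ ≤ (∑ ω, (Real.sqrt (p ω) * (f ω - pExp p f)) ^ 2)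
        * (∑ ω, (Real.sqrt (p ω) * (g ω - pExp p g)) ^ 2) := h
    _ = pVar p f * pVar p g := by
        unfold pVar pExp
        congr 1 <;> refine Finset.sum_congr rfl fun ω _ => ?_ <;>
          rw [mul_pow, Real.sq_sqrt (hp ω)]

lemma pVar_le_pExp_sq (p : Ω → ℝ) (hsum : ∑ ω, p ω = 1) (f : Ω → ℝ) :
    pVar p f ≤ pExp p (fun ω => f ω ^ 2) := by
  unfold pVar pExp
  have : ∑ ω, p ω * (f ω - (∑ ω, p ω * f ω)) ^ 2
      = ∑ ω, p ω * f ω ^ 2 - (∑ ω, p ω * f ω) ^ 2 := by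
    set μ := ∑ ω, p ω * f ω with hμ
    have : ∑ ω, p ω * (f ω - μ) ^ 2
        = ∑ ω, (p ω * f ω ^ 2 - 2 * μ * (p ω * f ω) + μ ^ 2 * p ω) := by
      refine Finset.sum_congr rfl fun ω _ => by ring
    rw [this, Finset.sum_add_distrib, Finset.sum_sub_distrib, ← Finset.mul_sum,
      ← Finset.mul_sum, hsum]
    ring
  rw [this]
  nlinarith [sq_nonneg (∑ ω, p ω * f ω)]

lemma sum_pExp_pInd {k : ℕ} (p : Ω → ℝ) (hsum : ∑ ω, p ω = 1) (X : Ω → Fin k) :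
    ∑ a : Fin k, pExp p (pInd X a) = 1 := by
  unfold pExp pInd
  rw [Finset.sum_comm]
  calc ∑ ω, ∑ a : Fin k, p ω * (if X ω = a then 1 else 0) = ∑ ω, p ω := by
        refine Finset.sum_congr rfl fun ω _ => ?_
        rw [← Finset.mul_sum, Finset.sum_ite_eq Finset.univ (X ω) (fun _ => (1:ℝ))]
        simp
    _ = 1 := hsum

/-- `∑ a √(Var X_a) ≤ √k`. -/
lemma sum_sqrt_pVar_le {k : ℕ} (p : Ω → ℝ) (hp : ∀ ω, 0 ≤ p ω) (hsum : ∑ ω, p ω = 1)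
    (X : Ω → Fin k) :
    ∑ a : Fin k, Real.sqrt (pVar p (pInd X a)) ≤ Real.sqrt k := by
  have hvb : ∀ a, pVar p (pInd X a) ≤ pExp p (pInd X a) := by
    intro a
    refine (pVar_le_pExp_sq p hsum _).trans_eq ?_
    unfold pExp pInd
    refine Finset.sum_congr rfl fun ω _ => ?_
    by_cases h : X ω = a <;> simp [h]
  have hsq : (∑ a : Fin k, Real.sqrt (pVar p (pInd X a))) ^ 2 ≤ (k : ℝ) := by
    have := Finset.sum_mul_sq_le_sq_mul_sq Finset.univ (fun _ : Fin k => (1:ℝ))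
      (fun a => Real.sqrt (pVar p (pInd X a)))
    simp only [one_mul, one_pow, Finset.sum_const, Finset.card_univ, Fintype.card_fin,
      nsmul_eq_mul, mul_one] at this
    refine this.trans ?_
    have : ∑ a : Fin k, Real.sqrt (pVar p (pInd X a)) ^ 2 ≤ 1 := by
      rw [← sum_pExp_pInd p hsum X]
      refine Finset.sum_le_sum fun a _ => ?_
      rw [Real.sq_sqrt (pVar_nonneg p hp _)]
      exact hvb a
    nlinarith [(by positivity : (0:ℝ) ≤ (k:ℝ))]
  have h0 : 0 ≤ ∑ a : Fin k, Real.sqrt (pVar p (pInd X a)) :=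
    Finset.sum_nonneg fun a _ => Real.sqrt_nonneg _
  nlinarith [Real.sq_sqrt (by positivity : (0:ℝ) ≤ (k:ℝ)), Real.sqrt_nonneg (k:ℝ)]

lemma sum4_comm {α β γ δ : Type*} [Fintype α] [Fintype β] [Fintype γ] [Fintype δ]
    (f : α → β → γ → δ → ℝ) :
    ∑ a, ∑ b, ∑ c, ∑ d, f a b c d = ∑ c, ∑ d, ∑ a, ∑ b, f a b c d := by
  calc ∑ a, ∑ b, ∑ c, ∑ d, f a b c d
      = ∑ a, ∑ c, ∑ b, ∑ d, f a b c d :=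
        Finset.sum_congr rfl fun a _ => Finset.sum_comm
    _ = ∑ c, ∑ a, ∑ b, ∑ d, f a b c d := Finset.sum_comm
    _ = ∑ c, ∑ a, ∑ d, ∑ b, f a b c d :=
        Finset.sum_congr rfl fun c _ => Finset.sum_congr rfl fun a _ => Finset.sum_comm
    _ = ∑ c, ∑ d, ∑ a, ∑ b, f a b c d :=
        Finset.sum_congr rfl fun c _ => Finset.sum_comm

/-- Key expansion identity for the Gram matrix. -/
lemma gram_expand {κ : Type*} [Fintype κ] (q : Ω → ℝ) (u v : κ → Ω → ℝ) :
    ∑ ω, ∑ ω', (q ω * q ω') * ((∑ a, u a ω * u a ω') * (∑ b, v b ω * v b ω'))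
    = ∑ a, ∑ b, (∑ ω, q ω * (u a ω * v b ω)) ^ 2 := by
  have hsq : ∀ a b : κ, (∑ ω, q ω * (u a ω * v b ω)) ^ 2
      = ∑ ω, ∑ ω', (q ω * (u a ω * v b ω)) * (q ω' * (u a ω' * v b ω')) := by
    intro a b; rw [sq, Finset.sum_mul_sum]
  simp only [hsq]
  rw [show (∑ a : κ, ∑ b : κ, ∑ ω : Ω, ∑ ω' : Ω,
        (q ω * (u a ω * v b ω)) * (q ω' * (u a ω' * v b ω')))
      = ∑ ω : Ω, ∑ ω' : Ω, ∑ a : κ, ∑ b : κ,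
        (q ω * (u a ω * v b ω)) * (q ω' * (u a ω' * v b ω')) from
    sum4_comm fun a b ω ω' => (q ω * (u a ω * v b ω)) * (q ω' * (u a ω' * v b ω'))]
  refine Finset.sum_congr rfl fun ω _ => Finset.sum_congr rfl fun ω' _ => ?_
  rw [Finset.sum_mul_sum, Finset.mul_sum]
  refine Finset.sum_congr rfl fun a _ => ?_
  rw [Finset.mul_sum]
  exact Finset.sum_congr rfl fun b _ => by ring

lemma amgm_aux {V W : ℝ} (hV : 0 < V) (hW : 0 < W) :
    1 ≤ (1/2) * (1/V + 1/W) * (Real.sqrt V * Real.sqrt W) := by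
  have hsv := Real.sq_sqrt hV.le
  have hsw := Real.sq_sqrt hW.le
  have h1 : 0 < Real.sqrt V := Real.sqrt_pos.mpr hV
  have h2 : 0 < Real.sqrt W := Real.sqrt_pos.mpr hW
  have key : 2 * (Real.sqrt V * Real.sqrt W) ≤ V + W := by
    nlinarith [sq_nonneg (Real.sqrt V - Real.sqrt W)]
  have hmul : (1/V + 1/W) * (V * W) = W + V := by field_simp
  have hVW : V * W = (Real.sqrt V * Real.sqrt W) ^ 2 := by rw [mul_pow, hsv, hsw]
  nlinarith [mul_pos h1 h2, mul_pos hV hW]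

/-- For jointly distributed `[k]`-valued random variables `X₁, …, Xₙ`
with `Var X_{ia} > 0`, there are vectors `v₁, …, vₙ` in the unit ball such that for all
`i, j`:
`(1/k²)(Σ_{a,b} |Cov(X_{ia}, X_{jb})|)² ≤ ⟨v_i, v_j⟩
   ≤ (1/k) Σ_{a,b} ½(1/Var X_{ia} + 1/Var X_{jb}) Cov(X_{ia}, X_{jb})²`. -/
theorem stmt_5 {Ω : Type*} [Fintype Ω] (p : Ω → ℝ)
    (hp : ∀ ω, 0 ≤ p ω) (hsum : ∑ ω, p ω = 1)
    (n k : ℕ) (X : Fin n → Ω → Fin k)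
    (hvar : ∀ i a, 0 < pVar p (pInd (X i) a)) :
    ∃ v : Fin n → EuclideanSpace ℝ (Fin n),
      (∀ i, ‖v i‖ ≤ 1) ∧
      ∀ i j,
        (1 / (k : ℝ) ^ 2) *
            (∑ a : Fin k, ∑ b : Fin k, |pCov p (pInd (X i) a) (pInd (X j) b)|) ^ 2 ≤
          ⟪v i, v j⟫ ∧
        (⟪v i, v j⟫ : ℝ) ≤
          (1 / (k : ℝ)) * ∑ a : Fin k, ∑ b : Fin k,
            (1 / 2) * (1 / pVar p (pInd (X i) a) + 1 / pVar p (pInd (X j) b)) *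
              pCov p (pInd (X i) a) (pInd (X j) b) ^ 2 := by
  classical
  rcases Nat.eq_zero_or_pos n with hn | hn
  · subst hn
    exact ⟨0, fun i => i.elim0, fun i => i.elim0⟩
  -- basic positivity facts
  have hΩ : Nonempty Ω := by
    by_contra h
    rw [not_nonempty_iff] at h
    rw [Finset.univ_eq_empty, Finset.sum_empty] at hsum
    exact one_ne_zero hsum.symm
  have hk0 : 0 < k := (X ⟨0, hn⟩ (Classical.arbitrary Ω)).pos
  have hk : (0:ℝ) < (k:ℝ) := by exact_mod_cast hk0
  set V : Fin n → Fin k → ℝ := fun i a => pVar p (pInd (X i) a) with hV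
  set σ : Fin n → Fin k → ℝ := fun i a => Real.sqrt (V i a) with hσ
  have hσpos : ∀ i a, 0 < σ i a := fun i a => Real.sqrt_pos.mpr (hvar i a)
  have hσsq : ∀ i a, σ i a ^ 2 = V i a := fun i a => Real.sq_sqrt (hvar i a).le
  set c : Fin n → Fin k → Ω → ℝ :=
    fun i a ω => pInd (X i) a ω - pExp p (pInd (X i) a) with hc
  set u : Fin n → Fin k → Ω → ℝ :=
    fun i a ω => c i a ω / Real.sqrt (σ i a) with hu
  set C : Fin n → Fin k → Fin n → Fin k → ℝ :=
    fun i a j b => pCov p (pInd (X i) a) (pInd (X j) b) with hC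
  have hCov : ∀ i a j b, C i a j b = ∑ ω, p ω * (c i a ω * c j b ω) := fun i a j b => rfl
  -- the Gram matrix
  set M : Fin n → Fin n → ℝ :=
    fun i j => (1 / (k:ℝ)) * ∑ a, ∑ b, C i a j b ^ 2 / (σ i a * σ j b) with hM
  -- inner sums of u coincide with covariance over √σ's
  have huC : ∀ i a j b, ∑ ω, p ω * (u i a ω * u j b ω)
      = C i a j b / (Real.sqrt (σ i a) * Real.sqrt (σ j b)) := by
    intro i a j b
    rw [hCov, Finset.sum_div]
    refine Finset.sum_congr rfl fun ω _ => ?_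
    simp only [hu]
    field_simp
  have hCsq : ∀ i a j b,
      (∑ ω, p ω * (u i a ω * u j b ω)) ^ 2 = C i a j b ^ 2 / (σ i a * σ j b) := by
    intro i a j b
    rw [huC, div_pow, mul_pow, Real.sq_sqrt (hσpos i a).le, Real.sq_sqrt (hσpos j b).le]
  -- the factorizing matrix
  set A : Matrix (Ω × Ω) (Fin n) ℝ := Matrix.of fun w i =>
    (Real.sqrt (p w.1) * Real.sqrt (p w.2) / Real.sqrt k) *
      ∑ a, u i a w.1 * u i a w.2 with hA
  have hentry : ∀ i j, (Aᴴ * A) i j = M i j := by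
    intro i j
    have : (Aᴴ * A) i j = ∑ w : Ω × Ω, A w i * A w j := by
      simp [Matrix.mul_apply, Matrix.conjTranspose_apply]
    rw [this]
    have hprod : ∀ w : Ω × Ω, A w i * A w j
        = (1 / (k:ℝ)) * ((p w.1 * p w.2) * ((∑ a, u i a w.1 * u i a w.2) *
            (∑ b, u j b w.1 * u j b w.2))) := by
      intro w
      simp only [hA, Matrix.of_apply]
      rw [show (Real.sqrt (p w.1) * Real.sqrt (p w.2) / Real.sqrt k *
            ∑ a, u i a w.1 * u i a w.2) *
          (Real.sqrt (p w.1) * Real.sqrt (p w.2) / Real.sqrt k *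
            ∑ b, u j b w.1 * u j b w.2)
          = (1 / (Real.sqrt k * Real.sqrt k)) *
            (((Real.sqrt (p w.1) * Real.sqrt (p w.1)) *
              (Real.sqrt (p w.2) * Real.sqrt (p w.2))) *
              ((∑ a, u i a w.1 * u i a w.2) * (∑ b, u j b w.1 * u j b w.2))) by ring,
        Real.mul_self_sqrt (hp w.1), Real.mul_self_sqrt (hp w.2),
        Real.mul_self_sqrt hk.le]
    rw [Finset.sum_congr rfl fun w _ => hprod w]
    rw [← Finset.mul_sum, Fintype.sum_prod_type]
    rw [show (∑ ω, ∑ ω', (p ω * p ω') * ((∑ a, u i a ω * u i a ω') *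
          (∑ b, u j b ω * u j b ω')))
        = ∑ a, ∑ b, (∑ ω, p ω * (u i a ω * u j b ω)) ^ 2 from gram_expand p (u i) (u j)]
    rw [hM]
    congr 1
    exact Finset.sum_congr rfl fun a _ => Finset.sum_congr rfl fun b _ => hCsq i a j b
  -- positive semidefiniteness and factorization
  have hpsd : (Aᴴ * A).PosSemidef := Matrix.posSemidef_conjTranspose_mul_self A
  obtain ⟨B, hB⟩ : ∃ B : Matrix (Fin n) (Fin n) ℝ, Aᴴ * A = Bᴴ * B := by
    classical
    open scoped MatrixOrder in
    obtain ⟨X, hX, -, hXA⟩ :=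
      CFC.exists_sqrt_of_isSelfAdjoint_of_quasispectrumRestricts hpsd.isHermitian
        (QuasispectrumRestricts.nnreal_of_nonneg hpsd.nonneg)
    exact ⟨X, by rw [show Xᴴ = X from hX.star_eq]; exact hXA.symm⟩
  set v : Fin n → EuclideanSpace ℝ (Fin n) := fun i => WithLp.toLp 2 (fun m => B m i) with hv
  have hinner : ∀ i j, (⟪v i, v j⟫ : ℝ) = M i j := by
    intro i j
    have h1 : (⟪v i, v j⟫ : ℝ) = ∑ m, B m i * B m j := by
      simp [hv, PiLp.inner_apply, RCLike.inner_apply, mul_comm]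
    have h2 : (Bᴴ * B) i j = ∑ m, B m i * B m j := by
      simp [Matrix.mul_apply, Matrix.conjTranspose_apply]
    rw [h1, ← h2, ← hB, hentry]
  -- facts about sums of σ's
  have hσsum : ∀ i, ∑ a, σ i a ≤ Real.sqrt k := fun i => sum_sqrt_pVar_le p hp hsum (X i)
  have hσsum0 : ∀ i, 0 ≤ ∑ a, σ i a :=
    fun i => Finset.sum_nonneg fun a _ => (hσpos i a).le
  have hprodk : ∀ i j, (∑ a, σ i a) * (∑ b, σ j b) ≤ (k:ℝ) := by
    intro i j
    calc (∑ a, σ i a) * (∑ b, σ j b) ≤ Real.sqrt k * Real.sqrt k :=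
          mul_le_mul (hσsum i) (hσsum j) (hσsum0 j) (Real.sqrt_nonneg _)
      _ = (k:ℝ) := Real.mul_self_sqrt hk.le
  have hCle : ∀ i a j b, C i a j b ^ 2 / (σ i a * σ j b) ≤ σ i a * σ j b := by
    intro i a j b
    rw [div_le_iff₀ (mul_pos (hσpos i a) (hσpos j b))]
    have h := pCov_sq_le p hp (pInd (X i) a) (pInd (X j) b)
    calc C i a j b ^ 2 ≤ V i a * V j b := h
      _ = (σ i a * σ j b) * (σ i a * σ j b) := by
          rw [← hσsq i a, ← hσsq j b]; ring
  have hMle : ∀ i j, M i j ≤ 1 := by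
    intro i j
    have : ∑ a, ∑ b, C i a j b ^ 2 / (σ i a * σ j b) ≤ (k:ℝ) := by
      calc ∑ a, ∑ b, C i a j b ^ 2 / (σ i a * σ j b)
          ≤ ∑ a, ∑ b, σ i a * σ j b :=
            Finset.sum_le_sum fun a _ => Finset.sum_le_sum fun b _ => hCle i a j b
        _ = (∑ a, σ i a) * (∑ b, σ j b) := (Finset.sum_mul_sum _ _ _ _).symm
        _ ≤ (k:ℝ) := hprodk i j
    rw [hM]
    calc (1/(k:ℝ)) * ∑ a, ∑ b, C i a j b ^ 2 / (σ i a * σ j b)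
        ≤ (1/(k:ℝ)) * k := mul_le_mul_of_nonneg_left this (by positivity)
      _ = 1 := by field_simp
  have hMnn : ∀ i j, 0 ≤ ∑ a, ∑ b, C i a j b ^ 2 / (σ i a * σ j b) := by
    intro i j
    exact Finset.sum_nonneg fun a _ => Finset.sum_nonneg fun b _ =>
      div_nonneg (sq_nonneg _) (mul_pos (hσpos i a) (hσpos j b)).le
  refine ⟨v, ?_, ?_⟩
  · intro i
    have h2 : ‖v i‖ ^ 2 = M i i := by
      rw [← real_inner_self_eq_norm_sq, hinner]
    nlinarith [norm_nonneg (v i), hMle i i]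
  · intro i j
    have hCdef : ∀ a b, pCov p (pInd (X i) a) (pInd (X j) b) = C i a j b := fun _ _ => rfl
    have hVdefi : ∀ a, pVar p (pInd (X i) a) = V i a := fun _ => rfl
    have hVdefj : ∀ b, pVar p (pInd (X j) b) = V j b := fun _ => rfl
    constructor
    · -- lower bound
      rw [hinner i j]
      simp only [hCdef]
      have cs := Finset.sum_mul_sq_le_sq_mul_sq (Finset.univ : Finset (Fin k × Fin k))
        (fun z => |C i z.1 j z.2| / Real.sqrt (σ i z.1 * σ j z.2))
        (fun z => Real.sqrt (σ i z.1 * σ j z.2))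
      have eq1 : ∑ z : Fin k × Fin k,
          |C i z.1 j z.2| / Real.sqrt (σ i z.1 * σ j z.2) * Real.sqrt (σ i z.1 * σ j z.2)
          = ∑ a, ∑ b, |C i a j b| := by
        rw [Fintype.sum_prod_type]
        refine Finset.sum_congr rfl fun a _ => Finset.sum_congr rfl fun b _ => ?_
        rw [div_mul_cancel₀]
        exact (Real.sqrt_pos.mpr (mul_pos (hσpos i a) (hσpos j b))).ne'
      have eq2 : ∑ z : Fin k × Fin k,
          (|C i z.1 j z.2| / Real.sqrt (σ i z.1 * σ j z.2)) ^ 2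
          = ∑ a, ∑ b, C i a j b ^ 2 / (σ i a * σ j b) := by
        rw [Fintype.sum_prod_type]
        refine Finset.sum_congr rfl fun a _ => Finset.sum_congr rfl fun b _ => ?_
        rw [div_pow, sq_abs, Real.sq_sqrt (mul_pos (hσpos i a) (hσpos j b)).le]
      have eq3 : ∑ z : Fin k × Fin k, Real.sqrt (σ i z.1 * σ j z.2) ^ 2
          = (∑ a, σ i a) * (∑ b, σ j b) := by
        rw [Fintype.sum_prod_type, Finset.sum_mul_sum]
        refine Finset.sum_congr rfl fun a _ => Finset.sum_congr rfl fun b _ =>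
          Real.sq_sqrt (mul_pos (hσpos i a) (hσpos j b)).le
      rw [eq1, eq2, eq3] at cs
      have cs2 : (∑ a, ∑ b, |C i a j b|) ^ 2
          ≤ (∑ a, ∑ b, C i a j b ^ 2 / (σ i a * σ j b)) * k :=
        cs.trans (mul_le_mul_of_nonneg_left (hprodk i j) (hMnn i j))
      rw [hM]
      calc (1 / (k:ℝ) ^ 2) * (∑ a, ∑ b, |C i a j b|) ^ 2
          ≤ (1 / (k:ℝ) ^ 2) * ((∑ a, ∑ b, C i a j b ^ 2 / (σ i a * σ j b)) * k) :=
            mul_le_mul_of_nonneg_left cs2 (by positivity)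
        _ = 1 / (k:ℝ) * ∑ a, ∑ b, C i a j b ^ 2 / (σ i a * σ j b) := by
            field_simp
    · -- upper bound
      rw [hinner i j]
      simp only [hCdef, hVdefi, hVdefj, hM]
      refine mul_le_mul_of_nonneg_left ?_ (by positivity)
      refine Finset.sum_le_sum fun a _ => Finset.sum_le_sum fun b _ => ?_
      rw [hσ]
      rw [div_le_iff₀
        (mul_pos (Real.sqrt_pos.mpr (hvar i a)) (Real.sqrt_pos.mpr (hvar j b)))]
      nlinarith [amgm_aux (hvar i a) (hvar j b), sq_nonneg (C i a j b),
        mul_pos (Real.sqrt_pos.mpr (hvar i a)) (Real.sqrt_pos.mpr (hvar j b))]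

end
end

section
/- Let X₁, …, Xₙ be jointly distributed random variables with values in [k] = {1, …, k} on a finite probability space, and suppose Var X_{ia} > 0 for all i ∈ [n] and a ∈ [k]. Then there exist vectors v₁, …, vₙ in a real inner product space with ‖v_i‖ ≤ 1 for all i, such that for all i, j ∈ [n] and every permutation π of [k]: (Σ_{a∈[k]} |Cov(X_{ia}, X_{j,π(a)})|)⁴ ≤ ⟨v_i, v_j⟩ ≤ Σ_{(a,b)∈[k]²} (1/2)·(1/Var X_{ia} + 1/Var X_{jb})·Cov(X_{ia}, X_{jb})². -/
open Finset RealInnerProductSpace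

noncomputable section

variable {Ω : Type*} [Fintype Ω]

set_option linter.unusedSectionVars false

namespace Stmt6
lemma pVar_nonneg (p : Ω → ℝ) (hp : ∀ ω, 0 ≤ p ω) (f : Ω → ℝ) : 0 ≤ pVar p f :=
  Finset.sum_nonneg fun ω _ => mul_nonneg (hp ω) (sq_nonneg _)

lemma pVar_eq_pCov (p : Ω → ℝ) (f : Ω → ℝ) : pVar p f = pCov p f f := by
  simp [pVar, pCov, pExp, sq]

lemma pCov_expand (p : Ω → ℝ) (hsum : ∑ ω, p ω = 1) (f g : Ω → ℝ) :
    pCov p f g = pExp p (fun ω => f ω * g ω) - pExp p f * pExp p g := by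
  have h : ∀ ω : Ω, p ω * ((f ω - pExp p f) * (g ω - pExp p g))
      = p ω * (f ω * g ω) - pExp p f * (p ω * g ω) - pExp p g * (p ω * f ω)
        + pExp p f * pExp p g * p ω := fun ω => by ring
  calc pCov p f g = ∑ ω, p ω * ((f ω - pExp p f) * (g ω - pExp p g)) := rfl
    _ = ∑ ω, (p ω * (f ω * g ω) - pExp p f * (p ω * g ω) - pExp p g * (p ω * f ω)
          + pExp p f * pExp p g * p ω) := Finset.sum_congr rfl fun ω _ => h ω
    _ = (∑ ω, p ω * (f ω * g ω)) - pExp p f * (∑ ω, p ω * g ω)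
          - pExp p g * (∑ ω, p ω * f ω) + pExp p f * pExp p g * (∑ ω, p ω) := by
        simp only [Finset.sum_add_distrib, Finset.sum_sub_distrib, ← Finset.mul_sum]
    _ = pExp p (fun ω => f ω * g ω) - pExp p f * pExp p g := by
        rw [hsum]
        rw [show (∑ ω, p ω * (f ω * g ω)) = pExp p (fun ω => f ω * g ω) from rfl]
        rw [show (∑ ω, p ω * g ω) = pExp p g from rfl, show (∑ ω, p ω * f ω) = pExp p f from rfl]
        show _ = pExp p (fun ω => f ω * g ω) - _
        ring

lemma pVar_expand (p : Ω → ℝ) (hsum : ∑ ω, p ω = 1) (f : Ω → ℝ) :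
    pVar p f = pExp p (fun ω => f ω * f ω) - pExp p f * pExp p f := by
  rw [pVar_eq_pCov, pCov_expand p hsum]

lemma pCov_sq_le (p : Ω → ℝ) (hp : ∀ ω, 0 ≤ p ω) (f g : Ω → ℝ) :
    pCov p f g ^ 2 ≤ pVar p f * pVar p g := by
  have h := Finset.sum_mul_sq_le_sq_mul_sq Finset.univ
    (fun ω => Real.sqrt (p ω) * (f ω - pExp p f))
    (fun ω => Real.sqrt (p ω) * (g ω - pExp p g))
  calc pCov p f g ^ 2
      = (∑ ω, (Real.sqrt (p ω) * (f ω - pExp p f)) * (Real.sqrt (p ω) * (g ω - pExp p g))) ^ 2 := by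
        congr 1
        refine Finset.sum_congr rfl fun ω _ => ?_
        rw [show ∀ a b c : ℝ, (a*b)*(a*c) = (a*a)*(b*c) from fun a b c => by ring,
          Real.mul_self_sqrt (hp ω)]
    _ ≤ (∑ ω, (Real.sqrt (p ω) * (f ω - pExp p f)) ^ 2)
        * (∑ ω, (Real.sqrt (p ω) * (g ω - pExp p g)) ^ 2) := h
    _ = pVar p f * pVar p g := by
        congr 1 <;> refine Finset.sum_congr rfl fun ω _ => ?_ <;>
          rw [mul_pow, Real.sq_sqrt (hp ω)]

lemma abs_pCov_le (p : Ω → ℝ) (hp : ∀ ω, 0 ≤ p ω) (f g : Ω → ℝ) :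
    |pCov p f g| ≤ Real.sqrt (pVar p f) * Real.sqrt (pVar p g) := by
  have h := pCov_sq_le p hp f g
  have h2 := Real.sqrt_le_sqrt h
  rwa [Real.sqrt_sq_eq_abs, Real.sqrt_mul (pVar_nonneg p hp f)] at h2

lemma sum_pInd {k : ℕ} (X : Ω → Fin k) (ω : Ω) : ∑ a, pInd X a ω = 1 := by
  simp [pInd, Finset.sum_ite_eq]

lemma pExp_pInd_nonneg (p : Ω → ℝ) (hp : ∀ ω, 0 ≤ p ω) {k : ℕ} (X : Ω → Fin k) (a : Fin k) :
    0 ≤ pExp p (pInd X a) :=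
  Finset.sum_nonneg fun ω _ => mul_nonneg (hp ω) (by unfold pInd; positivity)

lemma sum_pExp_pInd (p : Ω → ℝ) (hsum : ∑ ω, p ω = 1) {k : ℕ} (X : Ω → Fin k) :
    ∑ a, pExp p (pInd X a) = 1 := by
  unfold pExp
  rw [Finset.sum_comm]
  calc ∑ ω, ∑ a, p ω * pInd X a ω = ∑ ω, p ω * ∑ a, pInd X a ω := by
        simp [Finset.mul_sum]
    _ = 1 := by simp [sum_pInd, hsum]

lemma pInd_mul {k : ℕ} (X : Ω → Fin k) (a b : Fin k) (ω : Ω) :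
    pInd X a ω * pInd X b ω = if a = b then pInd X a ω else 0 := by
  unfold pInd
  split_ifs with h1 h2 h3 <;> simp_all

lemma pCov_pInd (p : Ω → ℝ) (hsum : ∑ ω, p ω = 1) {k : ℕ} (X : Ω → Fin k) (a b : Fin k) :
    pCov p (pInd X a) (pInd X b)
      = (if a = b then pExp p (pInd X a) else 0) - pExp p (pInd X a) * pExp p (pInd X b) := by
  rw [pCov_expand p hsum]
  congr 1
  calc pExp p (fun ω => pInd X a ω * pInd X b ω)
      = pExp p (fun ω => if a = b then pInd X a ω else 0) := by
        unfold pExp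
        refine Finset.sum_congr rfl fun ω _ => ?_
        show p ω * (pInd X a ω * pInd X b ω) = p ω * (if a = b then pInd X a ω else 0)
        rw [pInd_mul]
    _ = if a = b then pExp p (pInd X a) else 0 := by
        split_ifs <;> simp [pExp]

lemma pVar_pInd (p : Ω → ℝ) (hsum : ∑ ω, p ω = 1) {k : ℕ} (X : Ω → Fin k) (a : Fin k) :
    pVar p (pInd X a) = pExp p (pInd X a) - pExp p (pInd X a) * pExp p (pInd X a) := by
  rw [pVar_eq_pCov, pCov_pInd p hsum, if_pos rfl]

lemma sum_swap4 {α β γ δ : Type*} [Fintype α] [Fintype β] [Fintype γ] [Fintype δ]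
    (F : α → β → γ → δ → ℝ) :
    ∑ a, ∑ b, ∑ c, ∑ d, F a b c d = ∑ c, ∑ d, ∑ a, ∑ b, F a b c d := by
  calc ∑ a, ∑ b, ∑ c, ∑ d, F a b c d
      = ∑ a, ∑ c, ∑ b, ∑ d, F a b c d :=
        Finset.sum_congr rfl fun a _ => Finset.sum_comm
    _ = ∑ c, ∑ a, ∑ b, ∑ d, F a b c d := Finset.sum_comm
    _ = ∑ c, ∑ a, ∑ d, ∑ b, F a b c d :=
        Finset.sum_congr rfl fun c _ => Finset.sum_congr rfl fun a _ => Finset.sum_comm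
    _ = ∑ c, ∑ d, ∑ a, ∑ b, F a b c d :=
        Finset.sum_congr rfl fun c _ => Finset.sum_comm

lemma diag_bound {k : ℕ} (μ : Fin k → ℝ) (h0 : ∀ a, 0 < μ a) (h1 : ∀ a, μ a < 1)
    (hs : ∑ a, μ a ≤ 1) :
    ∑ a, ∑ b, ((if a = b then μ a else 0) - μ a * μ b) ^ 2 /
      (Real.sqrt (μ a - μ a * μ a) * Real.sqrt (μ b - μ b * μ b)) ≤ 1 := by
  have hV : ∀ a, 0 < μ a - μ a * μ a := fun a => by nlinarith [h0 a, h1 a]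
  set σ : Fin k → ℝ := fun a => Real.sqrt (μ a - μ a * μ a) with hσ
  have hσpos : ∀ a, 0 < σ a := fun a => Real.sqrt_pos.2 (hV a)
  have hσsq : ∀ a, σ a * σ a = μ a - μ a * μ a := fun a => Real.mul_self_sqrt (hV a).le
  set t : Fin k → ℝ := fun a => μ a * μ a / σ a with ht
  -- rewrite each term
  have step1 : ∀ a b : Fin k, ((if a = b then μ a else 0) - μ a * μ b) ^ 2 / (σ a * σ b)
      = t a * t b + (if a = b then (μ a - μ a * μ a - t a * t a) else 0) := by
    intro a b
    by_cases h : a = b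
    · subst h
      rw [if_pos rfl, if_pos rfl, hσsq]
      have hne : μ a - μ a * μ a ≠ 0 := (hV a).ne'
      rw [show (μ a - μ a * μ a) ^ 2 / (μ a - μ a * μ a) = μ a - μ a * μ a by
        rw [sq, mul_div_assoc, div_self hne, mul_one]]
      ring
    · rw [if_neg h, if_neg h, add_zero, ht]
      simp only []
      rw [div_mul_div_comm]
      congr 1
      ring
  have step2 : ∀ a : Fin k, t a * t a = μ a * μ a * (μ a * μ a) / (μ a - μ a * μ a) := by
    intro a
    rw [ht]; simp only []
    rw [div_mul_div_comm, hσsq]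
  -- Cauchy–Schwarz
  have hμne : ∀ a, Real.sqrt (μ a) ≠ 0 := fun a => (Real.sqrt_pos.2 (h0 a)).ne'
  have cs := Finset.sum_mul_sq_le_sq_mul_sq Finset.univ
    (fun a => Real.sqrt (μ a)) (fun a => t a / Real.sqrt (μ a))
  have cs1 : (∑ a, t a) ^ 2 ≤ (∑ a, μ a) * (∑ a, μ a * μ a / (1 - μ a)) := by
    have e1 : ∀ a : Fin k, Real.sqrt (μ a) * (t a / Real.sqrt (μ a)) = t a := fun a => by
      rw [mul_div_assoc']
      rw [mul_comm, mul_div_assoc, div_self (hμne a), mul_one]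
    have e2 : ∀ a : Fin k, Real.sqrt (μ a) ^ 2 = μ a := fun a => Real.sq_sqrt (h0 a).le
    have e3 : ∀ a : Fin k, (t a / Real.sqrt (μ a)) ^ 2 = μ a * μ a / (1 - μ a) := by
      intro a
      rw [div_pow, e2, sq, step2]
      rw [div_div]
      rw [show (μ a - μ a * μ a) * μ a = (μ a * μ a) * (1 - μ a) by ring]
      rw [mul_div_mul_left _ _ (mul_pos (h0 a) (h0 a)).ne']
    calc (∑ a, t a) ^ 2
        = (∑ a, Real.sqrt (μ a) * (t a / Real.sqrt (μ a))) ^ 2 := by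
          congr 1; exact (Finset.sum_congr rfl fun a _ => (e1 a)).symm
      _ ≤ (∑ a, Real.sqrt (μ a) ^ 2) * (∑ a, (t a / Real.sqrt (μ a)) ^ 2) := cs
      _ = (∑ a, μ a) * (∑ a, μ a * μ a / (1 - μ a)) := by
          congr 1
          · exact Finset.sum_congr rfl fun a _ => e2 a
          · exact Finset.sum_congr rfl fun a _ => e3 a
  have hQnonneg : 0 ≤ ∑ a, μ a * μ a / (1 - μ a) :=
    Finset.sum_nonneg fun a _ => div_nonneg (mul_nonneg (h0 a).le (h0 a).le) (by linarith [h1 a])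
  have cs2 : (∑ a, t a) * (∑ a, t a) ≤ ∑ a, μ a * μ a / (1 - μ a) := by
    have := mul_le_mul_of_nonneg_right hs hQnonneg
    calc (∑ a, t a) * (∑ a, t a) = (∑ a, t a) ^ 2 := (sq _).symm
      _ ≤ (∑ a, μ a) * (∑ a, μ a * μ a / (1 - μ a)) := cs1
      _ ≤ 1 * (∑ a, μ a * μ a / (1 - μ a)) := this
      _ = _ := one_mul _
  -- assemble
  calc ∑ a, ∑ b, ((if a = b then μ a else 0) - μ a * μ b) ^ 2 / (σ a * σ b)
      = ∑ a, ∑ b, (t a * t b + (if a = b then (μ a - μ a * μ a - t a * t a) else 0)) :=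
        Finset.sum_congr rfl fun a _ => Finset.sum_congr rfl fun b _ => step1 a b
    _ = (∑ a, t a) * (∑ a, t a) + ∑ a, (μ a - μ a * μ a - t a * t a) := by
        rw [Finset.sum_mul_sum]
        rw [← Finset.sum_add_distrib]
        refine Finset.sum_congr rfl fun a _ => ?_
        rw [Finset.sum_add_distrib, Finset.sum_ite_eq, if_pos (Finset.mem_univ a)]
    _ ≤ (∑ a, μ a * μ a / (1 - μ a)) + ∑ a, (μ a - μ a * μ a - t a * t a) := by
        linarith [cs2]
    _ = ∑ a, (μ a * μ a / (1 - μ a) + (μ a - μ a * μ a - t a * t a)) := by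
        rw [Finset.sum_add_distrib]
    _ = ∑ a, μ a := by
        refine Finset.sum_congr rfl fun a _ => ?_
        rw [step2]
        have hne1 : (1 : ℝ) - μ a ≠ 0 := by linarith [h1 a]
        have hne2 : μ a - μ a * μ a ≠ 0 := (hV a).ne'
        field_simp
        ring
    _ ≤ 1 := hs

end Stmt6

/-- **Unique-Games tensoring trick.** For jointly distributed `[k]`-valued
random variables `X₁, …, Xₙ` with `Var X_{ia} > 0`, there are vectors `v₁, …, vₙ` in the
unit ball such that for all `i, j` and every permutation `π` of `[k]`:
`(Σ_a |Cov(X_{ia}, X_{j,π(a)})|)⁴ ≤ ⟨v_i, v_j⟩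
   ≤ Σ_{a,b} ½(1/Var X_{ia} + 1/Var X_{jb}) Cov(X_{ia}, X_{jb})²`. -/
theorem stmt_6 {Ω : Type*} [Fintype Ω] (p : Ω → ℝ)
    (hp : ∀ ω, 0 ≤ p ω) (hsum : ∑ ω, p ω = 1)
    (n k : ℕ) (X : Fin n → Ω → Fin k)
    (hvar : ∀ i a, 0 < pVar p (pInd (X i) a)) :
    ∃ v : Fin n → EuclideanSpace ℝ (Fin n),
      (∀ i, ‖v i‖ ≤ 1) ∧
      ∀ (i j : Fin n) (π : Equiv.Perm (Fin k)),
        (∑ a : Fin k, |pCov p (pInd (X i) a) (pInd (X j) (π a))|) ^ 4 ≤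
          ⟪v i, v j⟫ ∧
        (⟪v i, v j⟫ : ℝ) ≤
          ∑ a : Fin k, ∑ b : Fin k,
            (1 / 2) * (1 / pVar p (pInd (X i) a) + 1 / pVar p (pInd (X j) b)) *
              pCov p (pInd (X i) a) (pInd (X j) b) ^ 2 := by
  classical
  set σ : Fin n → Fin k → ℝ := fun i a => Real.sqrt (pVar p (pInd (X i) a)) with hσdef
  set C : Fin n → Fin k → Ω → ℝ :=
    fun i a ω => pInd (X i) a ω - pExp p (pInd (X i) a) with hCdef
  set W : Fin n → Ω → Ω → ℝ := fun i ω ω' => ∑ a, C i a ω * C i a ω' / σ i a with hWdef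
  set M : Matrix (Fin n) (Fin n) ℝ :=
    Matrix.of fun i j => ∑ ω, ∑ ω', p ω * p ω' * (W i ω ω' * W j ω ω') with hMdef
  have hσpos : ∀ i a, 0 < σ i a := fun i a => by
    rw [hσdef]; exact Real.sqrt_pos.2 (hvar i a)
  have hσsq : ∀ i a, σ i a ^ 2 = pVar p (pInd (X i) a) := fun i a => by
    rw [hσdef]; exact Real.sq_sqrt (hvar i a).le
  have hCov : ∀ (i j : Fin n) (a b : Fin k),
      pCov p (pInd (X i) a) (pInd (X j) b) = ∑ ω, p ω * (C i a ω * C j b ω) := by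
    intro i j a b
    simp only [hCdef]
    rfl
  have hM : ∀ i j, M i j = ∑ a, ∑ b,
      pCov p (pInd (X i) a) (pInd (X j) b) ^ 2 / (σ i a * σ j b) := by
    intro i j
    have e1 : ∀ ω ω' : Ω, p ω * p ω' * (W i ω ω' * W j ω ω')
        = ∑ a, ∑ b, (p ω * (C i a ω * C j b ω)) * (p ω' * (C i a ω' * C j b ω'))
            / (σ i a * σ j b) := by
      intro ω ω'
      simp only [hWdef]
      rw [Finset.sum_mul_sum, Finset.mul_sum]
      refine Finset.sum_congr rfl fun a _ => ?_
      rw [Finset.mul_sum]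
      refine Finset.sum_congr rfl fun b _ => ?_
      ring
    calc M i j = ∑ ω, ∑ ω', ∑ a, ∑ b,
          (p ω * (C i a ω * C j b ω)) * (p ω' * (C i a ω' * C j b ω')) / (σ i a * σ j b) := by
          rw [hMdef]
          exact Finset.sum_congr rfl fun ω _ => Finset.sum_congr rfl fun ω' _ => e1 ω ω'
      _ = ∑ a, ∑ b, ∑ ω, ∑ ω',
          (p ω * (C i a ω * C j b ω)) * (p ω' * (C i a ω' * C j b ω')) / (σ i a * σ j b) :=
          Stmt6.sum_swap4 _
      _ = ∑ a, ∑ b, pCov p (pInd (X i) a) (pInd (X j) b) ^ 2 / (σ i a * σ j b) := by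
          refine Finset.sum_congr rfl fun a _ => Finset.sum_congr rfl fun b _ => ?_
          rw [hCov i j a b, sq, Finset.sum_mul_sum, Finset.sum_div]
          refine Finset.sum_congr rfl fun ω _ => ?_
          rw [Finset.sum_div]
  have hMnonneg : ∀ i j, 0 ≤ M i j := by
    intro i j
    rw [hM i j]
    refine Finset.sum_nonneg fun a _ => Finset.sum_nonneg fun b _ => ?_
    exact div_nonneg (sq_nonneg _) (mul_nonneg (hσpos i a).le (hσpos j b).le)
  have hPSD : M.PosSemidef := by
    refine Matrix.PosSemidef.of_dotProduct_mulVec_nonneg ?_ ?_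
    · show M.conjTranspose = M
      ext i j
      simp only [Matrix.conjTranspose_apply, hMdef, Matrix.of_apply, star_trivial]
      exact Finset.sum_congr rfl fun ω _ => Finset.sum_congr rfl fun ω' _ => by ring
    · intro x
      have key : ∀ ω ω' : Ω, (∑ i, ∑ j, x i * x j * (p ω * p ω' * (W i ω ω' * W j ω ω')))
          = p ω * p ω' * (∑ i, x i * W i ω ω') ^ 2 := by
        intro ω ω'
        rw [sq, Finset.sum_mul_sum, Finset.mul_sum]
        refine Finset.sum_congr rfl fun i _ => ?_
        rw [Finset.mul_sum]
        exact Finset.sum_congr rfl fun j _ => by ring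
      have expand : dotProduct (star x) (M.mulVec x) = ∑ i, ∑ j, x i * x j * M i j := by
        simp only [dotProduct, Matrix.mulVec, Pi.star_apply, star_trivial]
        refine Finset.sum_congr rfl fun i _ => ?_
        rw [Finset.mul_sum]
        exact Finset.sum_congr rfl fun j _ => by ring
      rw [expand]
      have expand2 : (∑ i, ∑ j, x i * x j * M i j)
          = ∑ ω, ∑ ω', p ω * p ω' * (∑ i, x i * W i ω ω') ^ 2 := by
        calc ∑ i, ∑ j, x i * x j * M i j
            = ∑ i, ∑ j, ∑ ω, ∑ ω', x i * x j * (p ω * p ω' * (W i ω ω' * W j ω ω')) := by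
              refine Finset.sum_congr rfl fun i _ => Finset.sum_congr rfl fun j _ => ?_
              rw [hMdef]
              simp only [Matrix.of_apply, Finset.mul_sum]
          _ = ∑ ω, ∑ ω', ∑ i, ∑ j, x i * x j * (p ω * p ω' * (W i ω ω' * W j ω ω')) :=
              Stmt6.sum_swap4 _
          _ = ∑ ω, ∑ ω', p ω * p ω' * (∑ i, x i * W i ω ω') ^ 2 :=
              Finset.sum_congr rfl fun ω _ => Finset.sum_congr rfl fun ω' _ => key ω ω'
      rw [expand2]
      refine Finset.sum_nonneg fun ω _ => Finset.sum_nonneg fun ω' _ => ?_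
      exact mul_nonneg (mul_nonneg (hp ω) (hp ω')) (sq_nonneg _)
  obtain ⟨B, hB⟩ : ∃ B : Matrix (Fin n) (Fin n) ℝ, M = B.conjTranspose * B := by
    open MatrixOrder in exact CStarAlgebra.nonneg_iff_eq_star_mul_self.mp (Matrix.nonneg_iff_posSemidef.mpr hPSD)
  set v : Fin n → EuclideanSpace ℝ (Fin n) :=
    fun i => (WithLp.equiv 2 (Fin n → ℝ)).symm (fun m => B m i) with hvdef
  have hinner : ∀ i j, (⟪v i, v j⟫ : ℝ) = M i j := by
    intro i j
    rw [hB]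
    simp [hvdef, PiLp.inner_apply, Matrix.mul_apply,
      Matrix.conjTranspose_apply, RCLike.inner_apply, conj_trivial, mul_comm]
  -- diagonal bound
  have hdiag : ∀ i, M i i ≤ 1 := by
    intro i
    have h0 : ∀ a, 0 < pExp p (pInd (X i) a) := by
      intro a
      have h1 := hvar i a
      rw [Stmt6.pVar_pInd p hsum] at h1
      have h2 := Stmt6.pExp_pInd_nonneg p hp (X i) a
      nlinarith
    have h1' : ∀ a, pExp p (pInd (X i) a) < 1 := by
      intro a
      have h1 := hvar i a
      rw [Stmt6.pVar_pInd p hsum] at h1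
      nlinarith [h0 a]
    have hsμ : ∑ a, pExp p (pInd (X i) a) ≤ 1 := le_of_eq (Stmt6.sum_pExp_pInd p hsum (X i))
    have hd := Stmt6.diag_bound (fun a => pExp p (pInd (X i) a)) h0 h1' hsμ
    beta_reduce at hd
    rw [hM i i]
    refine le_trans (le_of_eq ?_) hd
    refine Finset.sum_congr rfl fun a _ => Finset.sum_congr rfl fun b _ => ?_
    rw [Stmt6.pCov_pInd p hsum (X i) a b]
    rw [hσdef]
    simp only []
    rw [Stmt6.pVar_pInd p hsum (X i) a, Stmt6.pVar_pInd p hsum (X i) b]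
  refine ⟨v, ?_, ?_⟩
  · intro i
    have h2 : ‖v i‖ ^ 2 = M i i := by
      rw [← real_inner_self_eq_norm_sq]; exact hinner i i
    nlinarith [norm_nonneg (v i), hdiag i, h2]
  · intro i j π
    have hVar1 : ∀ (i : Fin n), ∑ a, pVar p (pInd (X i) a) ≤ 1 := by
      intro i
      have h1 : ∀ a, pVar p (pInd (X i) a) ≤ pExp p (pInd (X i) a) := by
        intro a
        rw [Stmt6.pVar_pInd p hsum]
        nlinarith [Stmt6.pExp_pInd_nonneg p hp (X i) a]
      calc ∑ a, pVar p (pInd (X i) a) ≤ ∑ a, pExp p (pInd (X i) a) :=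
            Finset.sum_le_sum fun a _ => h1 a
        _ = 1 := Stmt6.sum_pExp_pInd p hsum (X i)
    constructor
    · -- lower bound
      rw [hinner i j]
      set S : ℝ := ∑ a, |pCov p (pInd (X i) a) (pInd (X j) (π a))| with hSdef
      have hS0 : 0 ≤ S := Finset.sum_nonneg fun a _ => abs_nonneg _
      have hσσ : ∑ a, σ i a * σ j (π a) ≤ 1 := by
        have c := Finset.sum_mul_sq_le_sq_mul_sq Finset.univ
          (fun a => σ i a) (fun a => σ j (π a))
        have c1 : ∑ a, σ i a ^ 2 ≤ 1 := by
          calc ∑ a, σ i a ^ 2 = ∑ a, pVar p (pInd (X i) a) :=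
                Finset.sum_congr rfl fun a _ => hσsq i a
            _ ≤ 1 := hVar1 i
        have c2 : ∑ a, σ j (π a) ^ 2 ≤ 1 := by
          calc ∑ a, σ j (π a) ^ 2 = ∑ a, pVar p (pInd (X j) (π a)) :=
                Finset.sum_congr rfl fun a _ => hσsq j (π a)
            _ = ∑ b, pVar p (pInd (X j) b) := Equiv.sum_comp π (fun b => pVar p (pInd (X j) b))
            _ ≤ 1 := hVar1 j
        have cnn : 0 ≤ ∑ a, σ i a * σ j (π a) :=
          Finset.sum_nonneg fun a _ => mul_nonneg (hσpos i a).le (hσpos j (π a)).le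
        have c3 : 0 ≤ ∑ a, σ i a ^ 2 :=
          Finset.sum_nonneg fun a _ => sq_nonneg _
        nlinarith
      have hS1 : S ≤ 1 := by
        have : S ≤ ∑ a, σ i a * σ j (π a) := by
          refine Finset.sum_le_sum fun a _ => ?_
          rw [hσdef]
          exact Stmt6.abs_pCov_le p hp _ _
        linarith
      have hS2 : S ^ 2 ≤ ∑ a, pCov p (pInd (X i) a) (pInd (X j) (π a)) ^ 2
          / (σ i a * σ j (π a)) := by
        have c := Finset.sum_mul_sq_le_sq_mul_sq Finset.univ
          (fun a => |pCov p (pInd (X i) a) (pInd (X j) (π a))| / Real.sqrt (σ i a * σ j (π a)))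
          (fun a => Real.sqrt (σ i a * σ j (π a)))
        have hprodpos : ∀ a : Fin k, 0 < σ i a * σ j (π a) :=
          fun a => mul_pos (hσpos i a) (hσpos j (π a))
        have e1 : ∀ a : Fin k,
            |pCov p (pInd (X i) a) (pInd (X j) (π a))| / Real.sqrt (σ i a * σ j (π a))
              * Real.sqrt (σ i a * σ j (π a)) = |pCov p (pInd (X i) a) (pInd (X j) (π a))| :=
          fun a => div_mul_cancel₀ _ (Real.sqrt_pos.2 (hprodpos a)).ne'
        have e2 : ∀ a : Fin k,
            (|pCov p (pInd (X i) a) (pInd (X j) (π a))| / Real.sqrt (σ i a * σ j (π a))) ^ 2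
              = pCov p (pInd (X i) a) (pInd (X j) (π a)) ^ 2 / (σ i a * σ j (π a)) := by
          intro a
          rw [div_pow, sq_abs, Real.sq_sqrt (hprodpos a).le]
        have e3 : ∀ a : Fin k, (Real.sqrt (σ i a * σ j (π a))) ^ 2 = σ i a * σ j (π a) :=
          fun a => Real.sq_sqrt (hprodpos a).le
        rw [show S = ∑ a, |pCov p (pInd (X i) a) (pInd (X j) (π a))|
            / Real.sqrt (σ i a * σ j (π a)) * Real.sqrt (σ i a * σ j (π a)) from
          (Finset.sum_congr rfl fun a _ => (e1 a)).symm]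
        refine le_trans c ?_
        rw [Finset.sum_congr rfl fun a _ => e2 a, Finset.sum_congr rfl fun a _ => e3 a]
        have hnn : 0 ≤ ∑ a, pCov p (pInd (X i) a) (pInd (X j) (π a)) ^ 2
            / (σ i a * σ j (π a)) :=
          Finset.sum_nonneg fun a _ => div_nonneg (sq_nonneg _) (hprodpos a).le
        calc (∑ a, pCov p (pInd (X i) a) (pInd (X j) (π a)) ^ 2 / (σ i a * σ j (π a)))
              * (∑ a, σ i a * σ j (π a))
            ≤ (∑ a, pCov p (pInd (X i) a) (pInd (X j) (π a)) ^ 2 / (σ i a * σ j (π a))) * 1 :=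
              mul_le_mul_of_nonneg_left hσσ hnn
          _ = _ := mul_one _
      have hS3 : (∑ a, pCov p (pInd (X i) a) (pInd (X j) (π a)) ^ 2 / (σ i a * σ j (π a)))
          ≤ M i j := by
        rw [hM i j]
        refine Finset.sum_le_sum fun a _ => ?_
        refine Finset.single_le_sum
          (f := fun b => pCov p (pInd (X i) a) (pInd (X j) b) ^ 2 / (σ i a * σ j b))
          (fun b _ => div_nonneg (sq_nonneg _) (mul_nonneg (hσpos i a).le (hσpos j b).le))
          (Finset.mem_univ (π a))
      have hS2' : S ^ 2 ≤ M i j := le_trans hS2 hS3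
      have hS12 : S ^ 2 ≤ 1 := by nlinarith
      have h4 : S ^ 4 ≤ S ^ 2 := by nlinarith [hS12, sq_nonneg S]
      linarith
    · -- upper bound
      rw [hinner i j, hM i j]
      refine Finset.sum_le_sum fun a _ => Finset.sum_le_sum fun b _ => ?_
      have hx := hσpos i a
      have hy := hσpos j b
      have key : (σ i a * σ j b)⁻¹ ≤ 1 / 2 * (1 / σ i a ^ 2 + 1 / σ j b ^ 2) := by
        have h2 : (0:ℝ) ≤ (σ i a - σ j b) ^ 2 := sq_nonneg _
        have h3 : 1 / 2 * (1 / σ i a ^ 2 + 1 / σ j b ^ 2) - (σ i a * σ j b)⁻¹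
            = (σ i a - σ j b) ^ 2 / (2 * σ i a ^ 2 * σ j b ^ 2) := by
          field_simp
          ring
        have h4 : 0 ≤ (σ i a - σ j b) ^ 2 / (2 * σ i a ^ 2 * σ j b ^ 2) := by positivity
        linarith
      rw [hσsq i a, hσsq j b] at key
      calc pCov p (pInd (X i) a) (pInd (X j) b) ^ 2 / (σ i a * σ j b)
          = (σ i a * σ j b)⁻¹ * pCov p (pInd (X i) a) (pInd (X j) b) ^ 2 := by
            rw [div_eq_mul_inv, mul_comm]
        _ ≤ 1 / 2 * (1 / pVar p (pInd (X i) a) + 1 / pVar p (pInd (X j) b))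
            * pCov p (pInd (X i) a) (pInd (X j) b) ^ 2 :=
            mul_le_mul_of_nonneg_right key (sq_nonneg _)

end
end

section
/- Let v₁, …, vₙ be vectors in a real inner product space with ‖v_i‖ ≤ 1 for all i. Then for every ε > 0 there exists a subset U ⊆ {1, …, n} with |U| ≤ 1/ε such that, letting w_i denote the orthogonal projection of v_i onto the orthogonal complement of the span of {v_j : j ∈ U}, one has E_{i,j∈[n]} ⟨w_i, w_j⟩² / (‖w_i‖·‖w_j‖) ≤ ε, where a term is interpreted as 0 whenever w_i = 0 or w_j = 0. -/
open Finset RealInnerProductSpace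

noncomputable section

/-- **low-rank approximation for sets of vectors.** Given vectors
`v₁, …, vₙ` in the unit ball of a real inner product space, for every `ε > 0` there is a
subset `U` with `|U| ≤ 1/ε` such that, letting `w_i` be the orthogonal projection of
`v_i` onto the orthogonal complement of the span of `{v_j : j ∈ U}` (characterized by
`w_i ⊥ span` and `v_i - w_i ∈ span`), one has
`E_{i,j} ⟨w_i, w_j⟩²/(‖w_i‖·‖w_j‖) ≤ ε` (terms with a zero vector are `0`, which is the
Lean convention for division by zero). -/
theorem stmt_9 {H : Type*} [NormedAddCommGroup H] [InnerProductSpace ℝ H]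
    (n : ℕ) (hn : 0 < n) (v : Fin n → H) (hv : ∀ i, ‖v i‖ ≤ 1)
    (ε : ℝ) (hε : 0 < ε) :
    ∃ U : Finset (Fin n), (U.card : ℝ) ≤ 1 / ε ∧
      ∀ w : Fin n → H,
        (∀ i, w i ∈ (Submodule.span ℝ {x : H | ∃ j ∈ U, x = v j})ᗮ ∧
              v i - w i ∈ Submodule.span ℝ {x : H | ∃ j ∈ U, x = v j}) →
        (1 / (n : ℝ) ^ 2) * ∑ i, ∑ j, (⟪w i, w j⟫ : ℝ) ^ 2 / (‖w i‖ * ‖w j‖) ≤ ε := by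
  classical
  set S : Finset (Fin n) → Submodule ℝ H :=
    fun U => Submodule.span ℝ {x : H | ∃ j ∈ U, x = v j} with hS
  have hnR : (0:ℝ) < n := by exact_mod_cast hn
  -- existence of projections
  have hwex : ∀ U : Finset (Fin n), ∃ w : Fin n → H,
      ∀ i, w i ∈ (S U)ᗮ ∧ v i - w i ∈ S U := by
    intro U
    have hfin : FiniteDimensional ℝ (S U) := by
      apply FiniteDimensional.span_of_finite
      apply Set.Finite.subset (U.finite_toSet.image v)
      rintro x ⟨j, hj, rfl⟩
      exact ⟨j, hj, rfl⟩
    letI : CompleteSpace (S U) := FiniteDimensional.complete ℝ (S U)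
    refine ⟨fun i => v i - (Submodule.orthogonalProjection (S U) (v i) : H), fun i => ⟨?_, ?_⟩⟩
    · exact Submodule.sub_starProjection_mem_orthogonal _
    · simpa using (Submodule.orthogonalProjection (S U) (v i)).2
  choose w hw using hwex
  -- uniqueness
  have huniq : ∀ (U : Finset (Fin n)) (w' : Fin n → H),
      (∀ i, w' i ∈ (S U)ᗮ ∧ v i - w' i ∈ S U) → w' = w U := by
    intro U w' h
    funext i
    have h1 : w' i - w U i ∈ (S U)ᗮ := Submodule.sub_mem _ (h i).1 (hw U i).1
    have h2 : w' i - w U i ∈ S U := by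
      have := Submodule.sub_mem _ (hw U i).2 (h i).2
      have he : (v i - w U i) - (v i - w' i) = w' i - w U i := by abel
      rwa [he] at this
    have h0 : w' i - w U i = 0 :=
      (Submodule.disjoint_def.mp (Submodule.orthogonal_disjoint (S U))) _ h2 h1
    exact sub_eq_zero.mp h0
  -- norm bound
  have hwle : ∀ (U : Finset (Fin n)) (i : Fin n), ‖w U i‖ ≤ 1 := by
    intro U i
    have ho : (⟪w U i, v i - w U i⟫ : ℝ) = 0 := by
      have := (Submodule.mem_orthogonal (S U) (w U i)).mp (hw U i).1 _ (hw U i).2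
      rwa [real_inner_comm] at this
    have hsq : ‖v i‖ ^ 2 = ‖w U i‖ ^ 2 + ‖v i - w U i‖ ^ 2 := by
      have hvi : w U i + (v i - w U i) = v i := by abel
      have := norm_add_sq_real (w U i) (v i - w U i)
      rw [hvi, ho] at this
      linarith
    nlinarith [norm_nonneg (w U i), norm_nonneg (v i - w U i), hv i, norm_nonneg (v i),
      sq_nonneg (‖v i - w U i‖)]
  -- key decrease inequality
  have hdec : ∀ (U : Finset (Fin n)) (j₀ i : Fin n),
      ‖w (insert j₀ U) i‖ ^ 2 + (⟪w U i, w U j₀⟫ : ℝ) ^ 2 / ‖w U j₀‖ ^ 2 ≤ ‖w U i‖ ^ 2 := by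
    intro U j₀ i
    set U' := insert j₀ U with hU'
    have hle : S U ≤ S U' := by
      apply Submodule.span_mono
      rintro x ⟨j, hj, rfl⟩
      exact ⟨j, mem_insert_of_mem hj, rfl⟩
    set d := w U i - w U' i with hd
    have hdmem : d ∈ S U' := by
      have he : d = (v i - w U' i) - (v i - w U i) := by rw [hd]; abel
      rw [he]
      exact Submodule.sub_mem _ (hw U' i).2 (hle (hw U i).2)
    have hj₀mem : w U j₀ ∈ S U' := by
      have he : w U j₀ = v j₀ - (v j₀ - w U j₀) := by abel
      rw [he]
      refine Submodule.sub_mem _ ?_ (hle (hw U j₀).2)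
      exact Submodule.subset_span ⟨j₀, mem_insert_self _ _, rfl⟩
    have hod : (⟪w U' i, d⟫ : ℝ) = 0 := by
      have := (Submodule.mem_orthogonal (S U') (w U' i)).mp (hw U' i).1 _ hdmem
      rwa [real_inner_comm] at this
    have hoj : (⟪w U' i, w U j₀⟫ : ℝ) = 0 := by
      have := (Submodule.mem_orthogonal (S U') (w U' i)).mp (hw U' i).1 _ hj₀mem
      rwa [real_inner_comm] at this
    have hwi : w U i = w U' i + d := by rw [hd]; abel
    have hsq : ‖w U i‖ ^ 2 = ‖w U' i‖ ^ 2 + ‖d‖ ^ 2 := by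
      rw [hwi, norm_add_sq_real, hod]; ring
    have hinner : (⟪w U i, w U j₀⟫ : ℝ) = ⟪d, w U j₀⟫ := by
      rw [hwi, inner_add_left, hoj, zero_add]
    have hcs : (⟪d, w U j₀⟫ : ℝ) ^ 2 ≤ ‖d‖ ^ 2 * ‖w U j₀‖ ^ 2 := by
      have := real_inner_mul_inner_self_le d (w U j₀)
      rw [real_inner_self_eq_norm_sq, real_inner_self_eq_norm_sq] at this
      nlinarith [this]
    by_cases hz : ‖w U j₀‖ = 0
    · rw [hinner, hz]
      simp only [ne_eq, OfNat.ofNat_ne_zero, not_false_eq_true, zero_pow, div_zero, add_zero]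
      nlinarith [sq_nonneg ‖d‖]
    · have hzpos : (0:ℝ) < ‖w U j₀‖ ^ 2 := by positivity
      rw [hinner]
      have : (⟪d, w U j₀⟫ : ℝ) ^ 2 / ‖w U j₀‖ ^ 2 ≤ ‖d‖ ^ 2 :=
        (div_le_iff₀ hzpos).mpr hcs
      linarith
  -- energy
  set Φ : Finset (Fin n) → ℝ := fun U => ∑ i, ‖w U i‖ ^ 2 with hΦ
  set Q : Finset (Fin n) → ℝ :=
    fun U => ∑ i, ∑ j, (⟪w U i, w U j⟫ : ℝ) ^ 2 / (‖w U i‖ * ‖w U j‖) with hQ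
  have hΦnonneg : ∀ U, 0 ≤ Φ U := fun U => Finset.sum_nonneg fun i _ => sq_nonneg _
  have hΦle : ∀ U, Φ U ≤ n := by
    intro U
    calc Φ U ≤ ∑ _i : Fin n, (1:ℝ) := by
          apply Finset.sum_le_sum
          intro i _
          nlinarith [hwle U i, norm_nonneg (w U i)]
      _ = n := by simp
  -- the key step
  have key : ∀ U : Finset (Fin n), (n:ℝ)^2 * ε < Q U →
      ∃ j₀ ∉ U, Φ (insert j₀ U) + n * ε < Φ U := by
    intro U hQU
    -- pointwise AM-GM
    have amgm : ∀ a b : H, (⟪a,b⟫ : ℝ)^2 / (‖a‖ * ‖b‖) ≤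
        ((⟪a,b⟫ : ℝ)^2 / ‖a‖^2 + (⟪a,b⟫ : ℝ)^2 / ‖b‖^2) / 2 := by
      intro a b
      by_cases ha : a = 0
      · simp [ha]
      by_cases hb : b = 0
      · simp [hb]
      have hna : (0:ℝ) < ‖a‖ := norm_pos_iff.mpr ha
      have hnb : (0:ℝ) < ‖b‖ := norm_pos_iff.mpr hb
      rw [div_add_div _ _ (by positivity) (by positivity), div_div,
        div_le_div_iff₀ (by positivity) (by positivity)]
      have hc : (0:ℝ) ≤ (⟪a,b⟫ : ℝ)^2 := sq_nonneg _
      nlinarith [mul_nonneg (mul_nonneg hc (mul_pos hna hnb).le) (sq_nonneg (‖a‖ - ‖b‖))]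
    have hQle : Q U ≤ ∑ j, ∑ i, (⟪w U i, w U j⟫ : ℝ)^2 / ‖w U j‖^2 := by
      have h1 : 2 * Q U ≤ ∑ i, ∑ j,
          ((⟪w U i, w U j⟫ : ℝ)^2 / ‖w U i‖^2 + (⟪w U i, w U j⟫ : ℝ)^2 / ‖w U j‖^2) := by
        rw [hQ, Finset.mul_sum]
        apply Finset.sum_le_sum; intro i _
        rw [Finset.mul_sum]
        apply Finset.sum_le_sum; intro j _
        have := amgm (w U i) (w U j)
        linarith
      have hsymA : ∑ i, ∑ j, (⟪w U i, w U j⟫ : ℝ)^2 / ‖w U i‖^2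
          = ∑ j, ∑ i, (⟪w U i, w U j⟫ : ℝ)^2 / ‖w U j‖^2 := by
        refine Finset.sum_congr rfl fun x _ => Finset.sum_congr rfl fun y _ => ?_
        rw [real_inner_comm]
      have hsymB : (∑ i, ∑ j, (⟪w U i, w U j⟫ : ℝ)^2 / ‖w U j‖^2)
          = ∑ j, ∑ i, (⟪w U i, w U j⟫ : ℝ)^2 / ‖w U j‖^2 := Finset.sum_comm
      have h2 : ∑ i, ∑ j, ((⟪w U i, w U j⟫ : ℝ)^2 / ‖w U i‖^2
            + (⟪w U i, w U j⟫ : ℝ)^2 / ‖w U j‖^2)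
          = 2 * ∑ j, ∑ i, (⟪w U i, w U j⟫ : ℝ)^2 / ‖w U j‖^2 := by
        simp only [Finset.sum_add_distrib]
        rw [hsymA, hsymB]; ring
      linarith
    have hex : ∃ j₀, (n:ℝ) * ε < ∑ i, (⟪w U i, w U j₀⟫ : ℝ)^2 / ‖w U j₀‖^2 := by
      by_contra hcon
      push_neg at hcon
      have : ∑ j, ∑ i, (⟪w U i, w U j⟫ : ℝ)^2 / ‖w U j‖^2 ≤ ∑ _j : Fin n, (n:ℝ) * ε :=
        Finset.sum_le_sum fun j _ => hcon j
      simp only [Finset.sum_const, Finset.card_univ, Fintype.card_fin, nsmul_eq_mul] at this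
      nlinarith [hQle, hQU]
    obtain ⟨j₀, hj₀⟩ := hex
    have hwj₀ : w U j₀ ≠ 0 := by
      intro h0
      rw [h0] at hj₀
      simp only [inner_zero_right, norm_zero] at hj₀
      norm_num at hj₀
      nlinarith [mul_pos hnR hε]
    have hj₀U : j₀ ∉ U := by
      intro hmem
      apply hwj₀
      have hvmem : v j₀ ∈ S U := Submodule.subset_span ⟨j₀, hmem, rfl⟩
      have : w U j₀ ∈ S U := by
        have he : w U j₀ = v j₀ - (v j₀ - w U j₀) := by abel
        rw [he]
        exact Submodule.sub_mem _ hvmem (hw U j₀).2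
      exact (Submodule.disjoint_def.mp (Submodule.orthogonal_disjoint (S U))) _ this (hw U j₀).1
    refine ⟨j₀, hj₀U, ?_⟩
    have hsum : Φ (insert j₀ U) + ∑ i, (⟪w U i, w U j₀⟫ : ℝ)^2 / ‖w U j₀‖^2 ≤ Φ U := by
      rw [hΦ]
      rw [← Finset.sum_add_distrib]
      exact Finset.sum_le_sum fun i _ => hdec U j₀ i
    linarith
  -- pick maximal-card U in the invariant set
  set T : Finset (Finset (Fin n)) :=
    Finset.univ.filter (fun U => Φ U + U.card * ((n:ℝ) * ε) ≤ n) with hT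
  have hTne : T.Nonempty := by
    refine ⟨∅, ?_⟩
    rw [hT, Finset.mem_filter]
    refine ⟨Finset.mem_univ _, ?_⟩
    simpa using hΦle ∅
  obtain ⟨U, hUT, hUmax⟩ := T.exists_max_image (fun U => U.card) hTne
  rw [hT, Finset.mem_filter] at hUT
  have hInv : Φ U + U.card * ((n:ℝ) * ε) ≤ n := hUT.2
  have hQU : Q U ≤ (n:ℝ)^2 * ε := by
    by_contra hcon
    push_neg at hcon
    obtain ⟨j₀, hj₀U, hdecr⟩ := key U hcon
    have hmem : insert j₀ U ∈ T := by
      rw [hT, Finset.mem_filter]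
      refine ⟨Finset.mem_univ _, ?_⟩
      rw [Finset.card_insert_of_notMem hj₀U]
      push_cast
      nlinarith [hdecr, hInv]
    have := hUmax _ hmem
    rw [Finset.card_insert_of_notMem hj₀U] at this
    omega
  refine ⟨U, ?_, ?_⟩
  · have h1 : (U.card : ℝ) * ((n:ℝ) * ε) ≤ n := by linarith [hΦnonneg U]
    rw [le_div_iff₀ hε]
    nlinarith [h1, hnR]
  · intro w' hw'
    rw [huniq U w' hw']
    have hQdef : ∑ i, ∑ j, (⟪w U i, w U j⟫ : ℝ) ^ 2 / (‖w U i‖ * ‖w U j‖) = Q U := rfl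
    rw [hQdef]
    have hn2 : (0:ℝ) < (n:ℝ)^2 := by positivity
    calc (1 / (n:ℝ)^2) * Q U ≤ (1 / (n:ℝ)^2) * ((n:ℝ)^2 * ε) := by
          apply mul_le_mul_of_nonneg_left hQU
          positivity
      _ = ε := by field_simp
  
end
end

section
/- Let v₁, …, vₙ be vectors in a real inner product space. Then there exists an index j₀ ∈ [n] such that, letting u := v_{j₀}/‖v_{j₀}‖ (and u := 0 if v_{j₀} = 0) and v′_i := v_i − ⟨v_i, u⟩·u for all i, one has E_{i∈[n]} ‖v′_i‖² ≤ E_{i∈[n]} ‖v_i‖² − E_{i,j∈[n]} ⟨v_i, v_j⟩² / (‖v_i‖·‖v_j‖), where a term of the last average is interpreted as 0 whenever v_i = 0 or v_j = 0. -/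
open Finset RealInnerProductSpace

noncomputable section

private lemma amgm_div (a x y : ℝ) (hx : 0 ≤ x) (hy : 0 ≤ y) :
    a ^ 2 / (x * y) ≤ a ^ 2 / x ^ 2 / 2 + a ^ 2 / y ^ 2 / 2 := by
  rcases eq_or_lt_of_le hx with h | h
  · rw [← h, zero_mul, div_zero]
    positivity
  rcases eq_or_lt_of_le hy with h' | h'
  · rw [← h', mul_zero, div_zero]
    positivity
  have key : a ^ 2 / x ^ 2 / 2 + a ^ 2 / y ^ 2 / 2 - a ^ 2 / (x * y)
      = a ^ 2 * (x - y) ^ 2 / (2 * x ^ 2 * y ^ 2) := by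
    field_simp
    ring
  have h0 : (0:ℝ) ≤ a ^ 2 * (x - y) ^ 2 / (2 * x ^ 2 * y ^ 2) := by positivity
  linarith [key ▸ h0]

/-- **one approximation step.** For vectors `v₁, …, vₙ` in a real inner
product space, there is an index `j₀` such that, letting `u` be the unit vector in the
direction of `v_{j₀}` (or `0` if `v_{j₀} = 0`) and `v'_i := v_i − ⟨v_i, u⟩·u`, one has
`E_i ‖v'_i‖² ≤ E_i ‖v_i‖² − E_{i,j} ⟨v_i, v_j⟩²/(‖v_i‖·‖v_j‖)` (terms with a zero vector
are `0`, the Lean convention for division by zero; note `‖0‖⁻¹ • 0 = 0`). -/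
theorem stmt_10 {H : Type*} [NormedAddCommGroup H] [InnerProductSpace ℝ H]
    (n : ℕ) (hn : 0 < n) (v : Fin n → H) :
    ∃ j₀ : Fin n,
      ∀ (u : H) (v' : Fin n → H),
        u = ‖v j₀‖⁻¹ • v j₀ →
        (∀ i, v' i = v i - (⟪v i, u⟫ : ℝ) • u) →
        (1 / (n : ℝ)) * ∑ i, ‖v' i‖ ^ 2 ≤
          (1 / (n : ℝ)) * ∑ i, ‖v i‖ ^ 2 -
            (1 / (n : ℝ) ^ 2) * ∑ i, ∑ j, (⟪v i, v j⟫ : ℝ) ^ 2 / (‖v i‖ * ‖v j‖) := by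
  set g : Fin n → ℝ := fun j => ∑ i, (⟪v i, v j⟫ : ℝ) ^ 2 / ‖v j‖ ^ 2 with hg
  obtain ⟨j₀, -, hj₀⟩ := Finset.exists_max_image Finset.univ g ⟨⟨0, hn⟩, mem_univ _⟩
  refine ⟨j₀, ?_⟩
  intro u v' hu hv'
  have hn' : (0:ℝ) < n := by exact_mod_cast hn
  -- the unit (or zero) vector has norm² ≤ 1
  have hu2 : ‖u‖ ^ 2 ≤ 1 := by
    rw [hu, norm_smul, norm_inv, norm_norm]
    rcases eq_or_ne (‖v j₀‖) 0 with h | h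
    · simp [h]
    · rw [inv_mul_cancel₀ h]; norm_num
  -- pointwise bound on ‖v' i‖²
  have h1 : ∀ i, ‖v' i‖ ^ 2 ≤ ‖v i‖ ^ 2 - (⟪v i, v j₀⟫ : ℝ) ^ 2 / ‖v j₀‖ ^ 2 := by
    intro i
    have hc : (⟪v i, u⟫ : ℝ) ^ 2 = (⟪v i, v j₀⟫ : ℝ) ^ 2 / ‖v j₀‖ ^ 2 := by
      rw [hu, real_inner_smul_right, mul_pow, inv_pow, inv_mul_eq_div]
    have hexp : ‖v' i‖ ^ 2
        = ‖v i‖ ^ 2 - 2 * (⟪v i, u⟫ : ℝ) ^ 2 + (⟪v i, u⟫ : ℝ) ^ 2 * ‖u‖ ^ 2 := by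
      rw [hv' i, @norm_sub_sq_real, real_inner_smul_right, norm_smul, mul_pow, Real.norm_eq_abs, sq_abs]
      ring
    rw [hexp, ← hc]
    nlinarith [sq_nonneg ((⟪v i, u⟫ : ℝ))]
  have hsum1 : ∑ i, ‖v' i‖ ^ 2 ≤ ∑ i, ‖v i‖ ^ 2 - g j₀ := by
    have := Finset.sum_le_sum (fun i (_ : i ∈ Finset.univ) => h1 i)
    rwa [Finset.sum_sub_distrib] at this
  -- AM-GM on the double sum
  have h2 : ∑ i, ∑ j, (⟪v i, v j⟫ : ℝ) ^ 2 / (‖v i‖ * ‖v j‖) ≤ ∑ j, g j := by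
    have step : ∑ i, ∑ j, (⟪v i, v j⟫ : ℝ) ^ 2 / (‖v i‖ * ‖v j‖)
        ≤ ∑ i, ∑ j, ((⟪v i, v j⟫ : ℝ) ^ 2 / ‖v i‖ ^ 2 / 2
            + (⟪v i, v j⟫ : ℝ) ^ 2 / ‖v j‖ ^ 2 / 2) :=
      Finset.sum_le_sum fun i _ => Finset.sum_le_sum fun j _ =>
        amgm_div _ _ _ (norm_nonneg _) (norm_nonneg _)
    refine step.trans_eq ?_
    have pA : (∑ i, ∑ j, (⟪v i, v j⟫ : ℝ) ^ 2 / ‖v i‖ ^ 2 / 2)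
        = (∑ i, ∑ j, (⟪v i, v j⟫ : ℝ) ^ 2 / ‖v i‖ ^ 2) / 2 := by
      rw [eq_comm]; simp_rw [Finset.sum_div]
    have pB : (∑ i, ∑ j, (⟪v i, v j⟫ : ℝ) ^ 2 / ‖v j‖ ^ 2 / 2)
        = (∑ i, ∑ j, (⟪v i, v j⟫ : ℝ) ^ 2 / ‖v j‖ ^ 2) / 2 := by
      rw [eq_comm]; simp_rw [Finset.sum_div]
    have e1 : (∑ i, ∑ j, (⟪v i, v j⟫ : ℝ) ^ 2 / ‖v i‖ ^ 2)
        = ∑ j, ∑ i, (⟪v i, v j⟫ : ℝ) ^ 2 / ‖v j‖ ^ 2 :=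
      Finset.sum_congr rfl fun a _ => Finset.sum_congr rfl fun b _ => by
        rw [real_inner_comm]
    have e2 : (∑ i, ∑ j, (⟪v i, v j⟫ : ℝ) ^ 2 / ‖v j‖ ^ 2)
        = ∑ j, ∑ i, (⟪v i, v j⟫ : ℝ) ^ 2 / ‖v j‖ ^ 2 := Finset.sum_comm
    simp only [hg]
    simp_rw [Finset.sum_add_distrib]
    rw [pA, pB, e1, e2]
    ring
  have h3 : ∑ j, g j ≤ (n : ℝ) * g j₀ := by
    have := Finset.sum_le_card_nsmul Finset.univ g (g j₀)
      (fun x _ => hj₀ x (mem_univ x))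
    simpa [nsmul_eq_mul] using this
  have hsum2 : ∑ i, ∑ j, (⟪v i, v j⟫ : ℝ) ^ 2 / (‖v i‖ * ‖v j‖) ≤ (n : ℝ) * g j₀ :=
    h2.trans h3
  have key1 : (1 / (n : ℝ)) * ∑ i, ‖v' i‖ ^ 2
      ≤ (1 / (n : ℝ)) * ∑ i, ‖v i‖ ^ 2 - (1 / (n : ℝ)) * g j₀ := by
    have := mul_le_mul_of_nonneg_left hsum1 (by positivity : (0:ℝ) ≤ 1 / (n:ℝ))
    rwa [mul_sub] at this
  have key2 : (1 / (n : ℝ) ^ 2) * ∑ i, ∑ j, (⟪v i, v j⟫ : ℝ) ^ 2 / (‖v i‖ * ‖v j‖)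
      ≤ (1 / (n : ℝ)) * g j₀ := by
    have := mul_le_mul_of_nonneg_left hsum2 (by positivity : (0:ℝ) ≤ 1 / (n:ℝ)^2)
    have heq : (1 / (n : ℝ) ^ 2) * ((n : ℝ) * g j₀) = (1 / (n : ℝ)) * g j₀ := by
      field_simp
    linarith [heq ▸ this]
  linarith

end
end

section
/- Let (X_i)_{i∈V} be jointly distributed random variables with values in [k] = {1, …, k} on a finite probability space, indexed by a finite set V, and let S, T ⊆ V. Let μ_T denote the law of X_T = (X_t)_{t∈T}, and let μ^{|S}_T denote the following distribution on [k]^T: sample x_S from the law of X_S = (X_s)_{s∈S}; then, independently for each t ∈ T, sample x_t from the conditional distribution of X_t given X_S = x_S. Then the total variation distance between μ_T and μ^{|S}_T is at most Σ_{t∈T} E_{{X_S}} Var[X_t | X_S]. -/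
open Finset

noncomputable section

variable {Ω : Type*} [Fintype Ω]

/-- Conditional probability `Pr[E | F]` (defined as `0` if `Pr[F] = 0`). -/
def pCondProb (p : Ω → ℝ) (E F : Ω → Prop) [DecidablePred E] [DecidablePred F] : ℝ :=
  pProb p (fun ω => E ω ∧ F ω) / pProb p F

section helpers
open Finset
variable {Ω : Type*} [Fintype Ω]

lemma pProb_nonneg (p : Ω → ℝ) (hp : ∀ ω, 0 ≤ p ω) (E : Ω → Prop) [DecidablePred E] :
    0 ≤ pProb p E :=
  Finset.sum_nonneg fun ω _ => by split <;> [exact hp ω; exact le_rfl]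

lemma pProb_mono (p : Ω → ℝ) (hp : ∀ ω, 0 ≤ p ω) (E F : Ω → Prop)
    [DecidablePred E] [DecidablePred F] (h : ∀ ω, E ω → F ω) : pProb p E ≤ pProb p F := by
  apply Finset.sum_le_sum
  intro ω _
  by_cases hE : E ω
  · simp [hE, h ω hE]
  · simp only [hE, if_false]
    split <;> [exact hp ω; exact le_rfl]

lemma pProb_congr (p : Ω → ℝ) (E F : Ω → Prop) [DecidablePred E] [DecidablePred F]
    (h : ∀ ω, E ω ↔ F ω) : pProb p E = pProb p F :=
  Finset.sum_congr rfl fun ω _ => by rw [if_congr (h ω) rfl rfl]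

lemma pCondProb_nonneg (p : Ω → ℝ) (hp : ∀ ω, 0 ≤ p ω) (E F : Ω → Prop)
    [DecidablePred E] [DecidablePred F] : 0 ≤ pCondProb p E F :=
  div_nonneg (pProb_nonneg p hp _) (pProb_nonneg p hp _)

lemma pCondProb_congr (p : Ω → ℝ) (E F E' F' : Ω → Prop) [DecidablePred E] [DecidablePred F]
    [DecidablePred E'] [DecidablePred F'] (hE : ∀ ω, E ω ↔ E' ω) (hF : ∀ ω, F ω ↔ F' ω) :
    pCondProb p E F = pCondProb p E' F' := by
  unfold pCondProb
  rw [pProb_congr p _ (fun ω => E' ω ∧ F' ω) (fun ω => and_congr (hE ω) (hF ω)),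
    pProb_congr p F F' hF]

lemma pProb_and_eq (p : Ω → ℝ) (hp : ∀ ω, 0 ≤ p ω) (E F : Ω → Prop)
    [DecidablePred E] [DecidablePred F] :
    pProb p (fun ω => E ω ∧ F ω) = pCondProb p E F * pProb p F := by
  by_cases h : pProb p F = 0
  · rw [h, mul_zero]
    have h1 : pProb p (fun ω => E ω ∧ F ω) ≤ 0 := h ▸ pProb_mono p hp _ F fun ω => And.right
    exact le_antisymm h1 (pProb_nonneg p hp _)
  · rw [pCondProb, div_mul_cancel₀ _ h]

lemma sum_pProb_and (p : Ω → ℝ) {k : ℕ} (X : Ω → Fin k) (F : Ω → Prop) [DecidablePred F] :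
    ∑ a, pProb p (fun ω => X ω = a ∧ F ω) = pProb p F := by
  unfold pProb
  rw [Finset.sum_comm]
  apply Finset.sum_congr rfl
  intro ω _
  by_cases hF : F ω
  · simp [hF]
  · simp [hF]

lemma sum_pCondProb (p : Ω → ℝ) {k : ℕ} (X : Ω → Fin k) (F : Ω → Prop) [DecidablePred F]
    (hF : pProb p F ≠ 0) : ∑ a, pCondProb p (fun ω => X ω = a) F = 1 := by
  unfold pCondProb
  rw [← Finset.sum_div, sum_pProb_and, div_self hF]

lemma pExp_pCond_pInd (p : Ω → ℝ) {k : ℕ} (X : Ω → Fin k) (a : Fin k) (F : Ω → Prop)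
    [DecidablePred F] :
    pExp (pCond p F) (pInd X a) = pCondProb p (fun ω => X ω = a) F := by
  unfold pExp pCond pInd pCondProb pProb
  rw [Finset.sum_div]
  apply Finset.sum_congr rfl
  intro ω _
  by_cases hF : F ω <;> by_cases hX : X ω = a <;> simp [hF, hX]

lemma pCond_total (p : Ω → ℝ) (F : Ω → Prop) [DecidablePred F] (hF : pProb p F ≠ 0) :
    ∑ ω, pCond p F ω = 1 := by
  unfold pCond
  have h : ∀ ω, (if F ω then p ω / pProb p F else 0) = (if F ω then p ω else 0) / pProb p F := by
    intro ω; split <;> simp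
  simp_rw [h]
  rw [← Finset.sum_div]
  exact div_self hF

lemma pVar_pCond_pInd (p : Ω → ℝ) {k : ℕ} (X : Ω → Fin k) (a : Fin k) (F : Ω → Prop)
    [DecidablePred F] (hF : pProb p F ≠ 0) :
    pVar (pCond p F) (pInd X a) =
      pCondProb p (fun ω => X ω = a) F - (pCondProb p (fun ω => X ω = a) F) ^ 2 := by
  set q := pCondProb p (fun ω => X ω = a) F with hq
  unfold pVar
  rw [pExp_pCond_pInd, ← hq]
  have hpt : ∀ ω, (pInd X a ω - q) ^ 2 = pInd X a ω * (1 - 2 * q) + q ^ 2 := by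
    intro ω
    unfold pInd
    split <;> ring
  unfold pExp
  calc ∑ ω, pCond p F ω * (pInd X a ω - q) ^ 2
      = ∑ ω, (pCond p F ω * pInd X a ω * (1 - 2*q) + pCond p F ω * q ^ 2) := by
        apply Finset.sum_congr rfl; intro ω _; rw [hpt ω]; ring
    _ = (∑ ω, pCond p F ω * pInd X a ω) * (1 - 2*q) + (∑ ω, pCond p F ω) * q ^ 2 := by
        rw [Finset.sum_add_distrib, ← Finset.sum_mul, ← Finset.sum_mul]
    _ = q * (1 - 2*q) + 1 * q ^ 2 := by
        rw [pCond_total p F hF]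
        rw [show (∑ ω, pCond p F ω * pInd X a ω) = pExp (pCond p F) (pInd X a) from rfl,
          pExp_pCond_pInd, ← hq]
    _ = q - q ^ 2 := by ring

lemma sum_fiber (p : Ω → ℝ) {β : Type*} [Fintype β] [DecidableEq β] (Y : Ω → β) (g : β → ℝ) :
    ∑ ω, p ω * g (Y ω) = ∑ z, pProb p (fun ω => Y ω = z) * g z := by
  unfold pProb
  simp_rw [Finset.sum_mul, ite_mul, zero_mul]
  rw [Finset.sum_comm]
  apply Finset.sum_congr rfl
  intro ω _
  rw [Finset.sum_ite_eq Finset.univ (Y ω) (fun z => p ω * g z)]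
  simp

lemma sum_pi_prod {ι : Type*} [Fintype ι] [DecidableEq ι] {k : ℕ} (g : ι → Fin k → ℝ) :
    ∑ y : ι → Fin k, ∏ t, g t (y t) = ∏ t, ∑ c, g t c := by
  rw [Finset.prod_univ_sum (fun _ => Finset.univ) g]
  rw [Fintype.piFinset_univ]

lemma sum_pi_ne {ι : Type*} [Fintype ι] [DecidableEq ι] {k : ℕ} (g : ι → Fin k → ℝ) (t : ι)
    (b : Fin k) (hg : ∀ t', ∑ c, g t' c = 1) :
    ∑ y : ι → Fin k, (if y t = b then 0 else ∏ t', g t' (y t')) = 1 - g t b := by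
  have key : ∀ y : ι → Fin k, (if y t = b then 0 else ∏ t', g t' (y t')) =
      ∏ t', (fun t' c => if t' = t ∧ c = b then 0 else g t' c) t' (y t') := by
    intro y
    by_cases hy : y t = b
    · rw [if_pos hy]
      rw [eq_comm]
      apply Finset.prod_eq_zero (Finset.mem_univ t)
      simp [hy]
    · rw [if_neg hy]
      apply Finset.prod_congr rfl
      intro t' _
      simp only
      rw [if_neg]
      rintro ⟨h1, h2⟩
      exact hy (h1 ▸ h2)
  simp_rw [key]
  rw [sum_pi_prod (fun t' c => if t' = t ∧ c = b then 0 else g t' c)]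
  have h1 : ∀ t', (∑ c, if t' = t ∧ c = b then 0 else g t' c) =
      if t' = t then 1 - g t b else 1 := by
    intro t'
    by_cases ht : t' = t
    · subst ht
      simp only [true_and, if_pos rfl]
      rw [← hg t']
      have h2 : ∀ c : Fin k, (if c = b then (0:ℝ) else g t' c) =
          g t' c - (if c = b then g t' c else 0) := by
        intro c; split <;> simp
      simp_rw [h2]
      rw [Finset.sum_sub_distrib, hg t', Finset.sum_ite_eq' Finset.univ b (fun c => g t' c)]
      simp [hg t']
    · simp only [ht, false_and, if_false]
      exact hg t'
  simp_rw [h1]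
  rw [Finset.prod_ite_eq' Finset.univ t (fun _ => 1 - g t b)]
  simp

lemma tv_ind {β : Type*} [Fintype β] [DecidableEq β] (A B : β) :
    ∑ x : β, |(if A = x then (1:ℝ) else 0) - (if B = x then 1 else 0)| =
      if A = B then 0 else 2 := by
  by_cases h : A = B
  · simp [h]
  · rw [if_neg h]
    have key : ∀ x, |(if A = x then (1:ℝ) else 0) - (if B = x then 1 else 0)| =
        (if A = x then (1:ℝ) else 0) + (if B = x then 1 else 0) := by
      intro x
      by_cases hA : A = x <;> by_cases hB : B = x
      · exact absurd (hA.trans hB.symm) h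
      · simp [hA, hB]
      · simp [hA, hB]
      · simp [hA, hB]
    simp_rw [key]
    rw [Finset.sum_add_distrib]
    rw [Finset.sum_ite_eq Finset.univ A (fun _ => (1:ℝ)),
      Finset.sum_ite_eq Finset.univ B (fun _ => (1:ℝ))]
    norm_num

end helpers

/-- **error of propagation rounding.** For jointly distributed
`[k]`-valued random variables `(X_i)_{i∈V}` and `S, T ⊆ V`, the total variation distance
(half the ℓ¹-distance) between the law `μ_T` of `X_T` and the distribution `μ^{|S}_T`
obtained by sampling `x_S ∼ X_S` and then each coordinate `t ∈ T` independently from the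
conditional law of `X_t` given `X_S = x_S`, is at most `Σ_{t∈T} E_{{X_S}} Var[X_t | X_S]`. -/
theorem stmt_12 {Ω : Type*} [Fintype Ω] (p : Ω → ℝ)
    (hp : ∀ ω, 0 ≤ p ω) (hsum : ∑ ω, p ω = 1)
    {V : Type*} [Fintype V] [DecidableEq V]
    (k : ℕ) (X : V → Ω → Fin k) (S T : Finset V) :
    (1 / 2) * ∑ x : T → Fin k,
        |pProb p (fun ω => ∀ t : T, X t ω = x t) -
          ∑ xS : S → Fin k,
            pProb p (fun ω => ∀ s : S, X s ω = xS s) *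
              ∏ t : T,
                pCondProb p (fun ω => X t ω = x t) (fun ω => ∀ s : S, X s ω = xS s)| ≤
      ∑ t ∈ T, pCondVarK p (X t) (fun ω => fun s : S => X s ω) := by
  classical
  set Y : Ω → (S → Fin k) := fun ω => fun s : S => X s ω with hYdef
  set P : (S → Fin k) → ℝ := fun z => pProb p (fun ω => Y ω = z) with hPdef
  set q : T → Fin k → (S → Fin k) → ℝ :=
    fun t a z => pCondProb p (fun ω => X t ω = a) (fun ω => Y ω = z) with hqdef
  set w : Ω → (T → Fin k) → ℝ := fun ω y => p ω * ∏ t : T, q t (y t) (Y ω) with hwdef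
  set A : Ω → (T → Fin k) := fun ω => fun t : T => X t ω with hAdef
  have hq0 : ∀ (t : T) (a : Fin k) (z : S → Fin k), 0 ≤ q t a z := fun t a z =>
    pCondProb_nonneg p hp _ _
  have hP0 : ∀ z, 0 ≤ P z := fun z => pProb_nonneg p hp _
  have hw0 : ∀ ω y, 0 ≤ w ω y := fun ω y =>
    mul_nonneg (hp ω) (Finset.prod_nonneg fun t _ => hq0 t (y t) (Y ω))
  have hPpos : ∀ ω, p ω ≠ 0 → P (Y ω) ≠ 0 := by
    intro ω hω
    have h1 : p ω ≤ P (Y ω) := by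
      have h2 := Finset.single_le_sum
        (f := fun ω' => if Y ω' = Y ω then p ω' else 0)
        (fun i _ => by by_cases h : Y i = Y ω <;> simp [h, hp i]) (Finset.mem_univ ω)
      simpa [hPdef, pProb] using h2
    exact ne_of_gt (lt_of_lt_of_le (lt_of_le_of_ne (hp ω) (Ne.symm hω)) h1)
  have hqsum : ∀ (t : T) (z : S → Fin k), P z ≠ 0 → ∑ a, q t a z = 1 := fun t z hz =>
    sum_pCondProb p (fun ω => X t ω) _ hz
  have hmarg : ∀ ω, ∑ y : T → Fin k, w ω y = p ω := by
    intro ω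
    simp only [hwdef]
    rw [← Finset.mul_sum]
    by_cases hω : p ω = 0
    · simp [hω]
    · rw [sum_pi_prod (fun t c => q t c (Y ω)),
        Finset.prod_eq_one (fun t _ => hqsum t (Y ω) (hPpos ω hω)), mul_one]
  have hμ : ∀ x : T → Fin k, pProb p (fun ω => ∀ t : T, X t ω = x t) =
      ∑ ω, ∑ y, w ω y * (if A ω = x then 1 else 0) := by
    intro x
    have h1 : ∀ ω, (∑ y, w ω y * (if A ω = x then 1 else 0)) =
        if A ω = x then p ω else 0 := by
      intro ω
      rw [← Finset.sum_mul, hmarg ω]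
      split <;> simp
    simp_rw [h1]
    unfold pProb
    apply Finset.sum_congr rfl
    intro ω _
    exact if_congr funext_iff.symm rfl rfl
  have hμ' : ∀ x : T → Fin k,
      (∑ xS : S → Fin k,
        pProb p (fun ω => ∀ s : S, X s ω = xS s) *
          ∏ t : T, pCondProb p (fun ω => X t ω = x t) (fun ω => ∀ s : S, X s ω = xS s)) =
      ∑ ω, ∑ y, w ω y * (if y = x then 1 else 0) := by
    intro x
    have h1 : ∀ ω, (∑ y, w ω y * (if y = x then 1 else 0)) = w ω x := by
      intro ω
      simp_rw [mul_ite, mul_one, mul_zero]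
      rw [Finset.sum_ite_eq' Finset.univ x (w ω)]
      simp
    simp_rw [h1, hwdef]
    rw [sum_fiber p Y (fun z => ∏ t : T, q t (x t) z)]
    apply Finset.sum_congr rfl
    intro z _
    congr 1
    · exact pProb_congr p _ _ (fun ω => funext_iff.symm)
    · apply Finset.prod_congr rfl
      intro t _
      exact pCondProb_congr p _ _ _ _ (fun ω => Iff.rfl) (fun ω => funext_iff.symm)
  -- the coupling disagreement mass
  set D : ℝ := ∑ ω, ∑ y, (if A ω = y then 0 else w ω y) with hDdef
  have hcore : (∑ x : T → Fin k,
      |pProb p (fun ω => ∀ t : T, X t ω = x t) -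
        ∑ xS : S → Fin k,
          pProb p (fun ω => ∀ s : S, X s ω = xS s) *
            ∏ t : T, pCondProb p (fun ω => X t ω = x t)
              (fun ω => ∀ s : S, X s ω = xS s)|) ≤ 2 * D := by
    have e1 : (∑ x : T → Fin k,
        |pProb p (fun ω => ∀ t : T, X t ω = x t) -
          ∑ xS : S → Fin k,
            pProb p (fun ω => ∀ s : S, X s ω = xS s) *
              ∏ t : T, pCondProb p (fun ω => X t ω = x t)
                (fun ω => ∀ s : S, X s ω = xS s)|) =
        ∑ x : T → Fin k, |∑ ω, ∑ y, (w ω y * (if A ω = x then 1 else 0) -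
            w ω y * (if y = x then 1 else 0))| := by
      apply Finset.sum_congr rfl
      intro x _
      rw [hμ x, hμ' x]
      simp_rw [← Finset.sum_sub_distrib]
    rw [e1]
    calc (∑ x : T → Fin k, |∑ ω, ∑ y, (w ω y * (if A ω = x then 1 else 0) -
            w ω y * (if y = x then 1 else 0))|)
        ≤ ∑ x : T → Fin k, ∑ ω, ∑ y, |w ω y * (if A ω = x then 1 else 0) -
            w ω y * (if y = x then 1 else 0)| := by
          apply Finset.sum_le_sum
          intro x _
          exact (Finset.abs_sum_le_sum_abs _ _).trans
            (Finset.sum_le_sum fun ω _ => Finset.abs_sum_le_sum_abs _ _)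
      _ = ∑ ω, ∑ y, ∑ x : T → Fin k, |w ω y * (if A ω = x then 1 else 0) -
            w ω y * (if y = x then 1 else 0)| := by
          rw [Finset.sum_comm]
          apply Finset.sum_congr rfl
          intro ω _
          rw [Finset.sum_comm]
      _ = ∑ ω, ∑ y, w ω y * (if A ω = y then 0 else 2) := by
          apply Finset.sum_congr rfl; intro ω _
          apply Finset.sum_congr rfl; intro y _
          have h2 : ∀ x : T → Fin k, |w ω y * (if A ω = x then 1 else 0) -
              w ω y * (if y = x then 1 else 0)| =
              w ω y * |(if A ω = x then (1:ℝ) else 0) - (if y = x then 1 else 0)| := by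
            intro x
            rw [← mul_sub, abs_mul, abs_of_nonneg (hw0 ω y)]
          simp_rw [h2]
          rw [← Finset.mul_sum, tv_ind (A ω) y]
      _ = 2 * D := by
          rw [hDdef, Finset.mul_sum]
          apply Finset.sum_congr rfl; intro ω _
          rw [Finset.mul_sum]
          apply Finset.sum_congr rfl; intro y _
          split <;> ring
  have hunion : D ≤ ∑ t : T, ∑ ω, ∑ y, (if X t ω = y t then 0 else w ω y) := by
    have h1 : D ≤ ∑ ω, ∑ y, ∑ t : T, (if X t ω = y t then 0 else w ω y) := by
      rw [hDdef]
      apply Finset.sum_le_sum; intro ω _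
      apply Finset.sum_le_sum; intro y _
      by_cases h : A ω = y
      · rw [if_pos h]
        exact Finset.sum_nonneg fun t _ => by
          by_cases h2 : X t ω = y t <;> simp [h2, hw0 ω y]
      · rw [if_neg h]
        obtain ⟨t0, ht0⟩ := Function.ne_iff.mp h
        have h3 : w ω y = (if X t0 ω = y t0 then (0:ℝ) else w ω y) := (if_neg ht0).symm
        refine le_trans (le_of_eq h3) ?_
        exact Finset.single_le_sum
          (f := fun t : T => if X t ω = y t then (0:ℝ) else w ω y)
          (fun t _ => by by_cases h2 : X t ω = y t <;> simp [h2, hw0 ω y])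
          (Finset.mem_univ t0)
    refine h1.trans (le_of_eq ?_)
    calc (∑ ω, ∑ y, ∑ t : T, (if X t ω = y t then 0 else w ω y))
        = ∑ ω, ∑ t : T, ∑ y, (if X t ω = y t then 0 else w ω y) :=
          Finset.sum_congr rfl fun ω _ => Finset.sum_comm
      _ = ∑ t : T, ∑ ω, ∑ y, (if X t ω = y t then 0 else w ω y) := Finset.sum_comm
  have hG : ∀ t : T, (∑ ω, ∑ y, (if X t ω = y t then 0 else w ω y)) =
      ∑ z, P z * ∑ a, (q t a z - q t a z ^ 2) := by
    intro t
    have h1 : ∀ ω, (∑ y, (if X t ω = y t then 0 else w ω y)) =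
        p ω * (1 - q t (X t ω) (Y ω)) := by
      intro ω
      simp only [hwdef]
      have h2 : ∀ y : T → Fin k,
          (if X t ω = y t then 0 else p ω * ∏ t' : T, q t' (y t') (Y ω)) =
          p ω * (if y t = X t ω then 0 else ∏ t' : T, q t' (y t') (Y ω)) := by
        intro y
        by_cases hc : X t ω = y t
        · rw [if_pos hc, if_pos hc.symm, mul_zero]
        · rw [if_neg hc, if_neg (fun hh => hc hh.symm)]
      simp_rw [h2]
      rw [← Finset.mul_sum]
      by_cases hω : p ω = 0
      · rw [hω]; ring
      · rw [sum_pi_ne (fun t' c => q t' c (Y ω)) t (X t ω)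
          (fun t' => hqsum t' (Y ω) (hPpos ω hω))]
    simp_rw [h1]
    have h4 : ∀ ω, p ω * (1 - q t (X t ω) (Y ω)) =
        p ω * (fun az : Fin k × (S → Fin k) => 1 - q t az.1 az.2) (X t ω, Y ω) := by
      intro ω; rfl
    simp_rw [h4]
    rw [sum_fiber p (fun ω => (X t ω, Y ω)) (fun az => 1 - q t az.1 az.2)]
    rw [Fintype.sum_prod_type]
    rw [Finset.sum_comm]
    apply Finset.sum_congr rfl
    intro z _
    rw [Finset.mul_sum]
    apply Finset.sum_congr rfl
    intro a _
    have h5 : pProb p (fun ω => (X t ω, Y ω) = (a, z)) =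
        pProb p (fun ω => X t ω = a ∧ Y ω = z) :=
      pProb_congr p _ _ (fun ω => Prod.mk.injEq _ _ _ _ ▸ Iff.rfl)
    rw [h5, pProb_and_eq p hp _ _]
    show q t a z * P z * (1 - q t a z) = P z * (q t a z - q t a z ^ 2)
    ring
  have hV : ∀ t : T, pCondVarK p (X t) Y = ∑ z, P z * ∑ a, (q t a z - q t a z ^ 2) := by
    intro t
    unfold pCondVarK pCondVar
    have hext : ∀ a : Fin k,
        (∑ z ∈ Finset.univ.image Y,
          if 0 < pProb p (fun ω => Y ω = z)
          then pProb p (fun ω => Y ω = z) * pVar (pCond p (fun ω => Y ω = z)) (pInd (X t) a)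
          else 0) =
        ∑ z : S → Fin k,
          if 0 < pProb p (fun ω => Y ω = z)
          then pProb p (fun ω => Y ω = z) * pVar (pCond p (fun ω => Y ω = z)) (pInd (X t) a)
          else 0 := by
      intro a
      apply Finset.sum_subset (Finset.subset_univ _)
      intro z _ hz
      rw [if_neg]
      have h0 : pProb p (fun ω => Y ω = z) = 0 := by
        apply Finset.sum_eq_zero
        intro ω _
        exact if_neg fun h => hz (Finset.mem_image.mpr ⟨ω, Finset.mem_univ ω, h⟩)
      rw [h0]
      exact lt_irrefl 0
    simp_rw [hext]
    rw [Finset.sum_comm]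
    apply Finset.sum_congr rfl
    intro z _
    by_cases hz : 0 < pProb p (fun ω => Y ω = z)
    · simp_rw [if_pos hz]
      rw [← Finset.mul_sum]
      congr 1
      apply Finset.sum_congr rfl
      intro a _
      exact pVar_pCond_pInd p (fun ω => X t ω) a (fun ω => Y ω = z) (ne_of_gt hz)
    · simp_rw [if_neg hz]
      have h0 : P z = 0 := le_antisymm (not_lt.mp hz) (hP0 z)
      rw [h0, zero_mul, Finset.sum_const_zero]
  -- put it all together
  have hfinal : ∑ t ∈ T, pCondVarK p (X t) Y =
      ∑ t : T, ∑ ω, ∑ y, (if X t ω = y t then 0 else w ω y) := by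
    rw [← Finset.sum_coe_sort T (fun t => pCondVarK p (X t) Y)]
    apply Finset.sum_congr rfl
    intro t _
    rw [hV t, ← hG t]
  rw [hfinal]
  refine le_trans (by linarith [hcore]) hunion

end
end

section
/- Let X₁, …, X_r be jointly distributed random variables with values in [k] = {1, …, k} on a finite probability space, and suppose there exist vectors v_{ia} (for i ∈ [r], a ∈ [k]) in a real inner product space such that ⟨v_{ia}, v_{jb}⟩ = E[X_{ia}·X_{jb}] for all i, j ∈ [r] and a, b ∈ [k]. Let S ⊆ [r] and let P_S denote the orthogonal projection onto the orthogonal complement of the span of {v_{jb} : j ∈ S, b ∈ [k]}. Then: (1) for every i ∈ [r] and a ∈ [k], E_{{X_S}} Var[X_{ia} | X_S] ≤ ‖P_S v_{ia}‖²; and (2) for every i ∈ [r], E_{{X_S}} Var[X_i | X_S] ≤ Σ_{a∈[k]} ‖P_S v_{ia}‖². -/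
open Finset RealInnerProductSpace

noncomputable section

variable {Ω : Type*} [Fintype Ω]

section auxlem

variable {β : Type*} [DecidableEq β]

lemma fiber_sum (Y : Ω → β) (h : Ω → ℝ) :
    ∑ y ∈ Finset.univ.image Y, ∑ ω, (if Y ω = y then h ω else 0) = ∑ ω, h ω := by
  rw [Finset.sum_comm]
  refine Finset.sum_congr rfl fun ω _ => ?_
  rw [Finset.sum_ite_eq (Finset.univ.image Y) (Y ω) (fun _ => h ω)]
  simp [Finset.mem_image_of_mem]

lemma prob_nonneg (p : Ω → ℝ) (hp : ∀ ω, 0 ≤ p ω) (Y : Ω → β) (y : β) :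
    0 ≤ pProb p (fun ω => Y ω = y) := by
  unfold pProb
  refine Finset.sum_nonneg fun ω _ => ?_
  split
  exacts [hp ω, le_rfl]

lemma zero_fiber (p : Ω → ℝ) (hp : ∀ ω, 0 ≤ p ω) (Y : Ω → β) (y : β)
    (hP : ¬ 0 < pProb p (fun ω => Y ω = y)) (h : Ω → ℝ) :
    ∑ ω, (if Y ω = y then p ω * h ω else 0) = 0 := by
  have hP0 : pProb p (fun ω => Y ω = y) = 0 :=
    le_antisymm (not_lt.mp hP) (prob_nonneg p hp Y y)
  unfold pProb at hP0
  have hz : ∀ ω ∈ Finset.univ, (if Y ω = y then p ω else 0) = 0 := by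
    refine (Finset.sum_eq_zero_iff_of_nonneg fun ω _ => ?_).mp hP0
    · try dsimp only
      split
      exacts [hp ω, le_rfl]
  refine Finset.sum_eq_zero fun ω _ => ?_
  have hzz := hz ω (Finset.mem_univ ω)
  by_cases hy : Y ω = y
  · rw [if_pos hy] at hzz ⊢
    rw [hzz, zero_mul]
  · rw [if_neg hy]

lemma condvar_eq (p : Ω → ℝ) (hp : ∀ ω, 0 ≤ p ω) (Y : Ω → β) (f : Ω → ℝ) :
    pCondVar p f Y = (∑ ω, p ω * (f ω * f ω)) -
      ∑ y ∈ Finset.univ.image Y,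
        (if 0 < pProb p (fun ω => Y ω = y)
         then (∑ ω, if Y ω = y then p ω * f ω else 0) ^ 2 / pProb p (fun ω => Y ω = y)
         else 0) := by
  have step1 : ∀ y : β, 0 < pProb p (fun ω => Y ω = y) →
      pProb p (fun ω => Y ω = y) * pVar (pCond p (fun ω => Y ω = y)) f
        = (∑ ω, if Y ω = y then p ω * (f ω * f ω) else 0)
          - (∑ ω, if Y ω = y then p ω * f ω else 0) ^ 2 / pProb p (fun ω => Y ω = y) := by
    intro y hPy
    set P := pProb p (fun ω => Y ω = y) with hPdef
    have hPne : P ≠ 0 := ne_of_gt hPy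
    set m := ∑ ω, if Y ω = y then p ω * f ω else 0 with hmdef
    have hmean : pExp (pCond p (fun ω => Y ω = y)) f = m / P := by
      rw [pExp, hmdef, Finset.sum_div]
      refine Finset.sum_congr rfl fun ω _ => ?_
      rw [pCond]
      split
      · ring
      · simp
    have hvar : pVar (pCond p (fun ω => Y ω = y)) f
        = (∑ ω, if Y ω = y then p ω * (f ω - m / P) ^ 2 else 0) / P := by
      rw [pVar, hmean, pExp]
      conv_rhs => rw [Finset.sum_div]
      apply Finset.sum_congr rfl
      intro ω _
      rw [pCond]
      split
      · ring
      · simp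
    rw [hvar, mul_comm, div_mul_cancel₀ _ hPne]
    have expand : ∀ ω, (if Y ω = y then p ω * (f ω - m / P) ^ 2 else 0)
        = (if Y ω = y then p ω * (f ω * f ω) else 0)
          - (2 * (m / P)) * (if Y ω = y then p ω * f ω else 0)
          + (m / P) ^ 2 * (if Y ω = y then p ω else 0) := by
      intro ω; split <;> ring
    set Q := ∑ ω, (if Y ω = y then p ω * (f ω * f ω) else 0) with hQdef
    have hPsum : (∑ ω, if Y ω = y then p ω else 0) = P := rfl
    calc ∑ ω, (if Y ω = y then p ω * (f ω - m / P) ^ 2 else 0)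
        = ∑ ω, ((if Y ω = y then p ω * (f ω * f ω) else 0)
          - (2 * (m / P)) * (if Y ω = y then p ω * f ω else 0)
          + (m / P) ^ 2 * (if Y ω = y then p ω else 0)) :=
          Finset.sum_congr rfl fun ω _ => expand ω
      _ = Q - (2 * (m / P)) * m + (m / P) ^ 2 * P := by
          rw [Finset.sum_add_distrib, Finset.sum_sub_distrib, ← Finset.mul_sum,
            ← Finset.mul_sum, hPsum, ← hmdef, ← hQdef]
      _ = Q - m ^ 2 / P := by
          field_simp
          ring
  rw [pCondVar]
  have congr1 : ∀ y ∈ Finset.univ.image Y,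
      (if 0 < pProb p (fun ω => Y ω = y)
       then pProb p (fun ω => Y ω = y) * pVar (pCond p (fun ω => Y ω = y)) f else 0)
      = (if 0 < pProb p (fun ω => Y ω = y)
          then (∑ ω, if Y ω = y then p ω * (f ω * f ω) else 0) else 0)
        - (if 0 < pProb p (fun ω => Y ω = y)
          then (∑ ω, if Y ω = y then p ω * f ω else 0) ^ 2 / pProb p (fun ω => Y ω = y)
          else 0) := by
    intro y _
    split
    · rename_i h; rw [step1 y h]
    · simp
  rw [Finset.sum_congr rfl congr1, Finset.sum_sub_distrib]
  congr 1
  have congr2 : ∀ y ∈ Finset.univ.image Y,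
      (if 0 < pProb p (fun ω => Y ω = y)
        then (∑ ω, if Y ω = y then p ω * (f ω * f ω) else 0) else 0)
      = ∑ ω, if Y ω = y then p ω * (f ω * f ω) else 0 := by
    intro y _
    split
    · rfl
    · rename_i h; rw [zero_fiber p hp Y y h (fun ω => f ω * f ω)]
  rw [Finset.sum_congr rfl congr2, fiber_sum Y (fun ω => p ω * (f ω * f ω))]

lemma keyineq (p : Ω → ℝ) (hp : ∀ ω, 0 ≤ p ω) (Y : Ω → β) (f g : Ω → ℝ) (G : β → ℝ)
    (hgY : ∀ ω, g ω = G (Y ω))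
    (heq : ∑ ω, p ω * (f ω * g ω) = ∑ ω, p ω * (g ω * g ω)) :
    pCondVar p f Y ≤ (∑ ω, p ω * (f ω * f ω)) - ∑ ω, p ω * (g ω * g ω) := by
  rw [condvar_eq p hp Y f]
  set P : β → ℝ := fun y => pProb p (fun ω => Y ω = y) with hPdef
  set m : β → ℝ := fun y => ∑ ω, if Y ω = y then p ω * f ω else 0 with hmdef
  set A : ℝ := ∑ y ∈ Finset.univ.image Y, (if 0 < P y then (m y) ^ 2 / P y else 0) with hAdef
  have hA0 : 0 ≤ A := by
    refine Finset.sum_nonneg fun y _ => ?_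
    split
    · positivity
    · exact le_rfl
  have key : ∑ ω, p ω * (g ω * g ω) ≤ A := by
    set Egg := ∑ ω, p ω * (g ω * g ω) with hEggdef
    have hEggnn : 0 ≤ Egg :=
      Finset.sum_nonneg fun ω _ => mul_nonneg (hp ω) (mul_self_nonneg _)
    have hEfg : ∑ ω, p ω * (f ω * g ω)
        = ∑ y ∈ Finset.univ.image Y, (if 0 < P y then m y * G y else 0) := by
      rw [← fiber_sum Y (fun ω => p ω * (f ω * g ω))]
      refine Finset.sum_congr rfl fun y _ => ?_
      split
      · rw [hmdef]
        dsimp only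
        rw [Finset.sum_mul]
        refine Finset.sum_congr rfl fun ω _ => ?_
        split
        · rename_i hy; rw [hgY ω, hy]; ring
        · rw [zero_mul]
      · rename_i h; exact zero_fiber p hp Y y h (fun ω => f ω * g ω)
    have hEgg : Egg = ∑ y ∈ Finset.univ.image Y, (if 0 < P y then P y * (G y) ^ 2 else 0) := by
      rw [hEggdef, ← fiber_sum Y (fun ω => p ω * (g ω * g ω))]
      refine Finset.sum_congr rfl fun y _ => ?_
      split
      · rw [hPdef]
        dsimp only [pProb]
        rw [Finset.sum_mul]
        refine Finset.sum_congr rfl fun ω _ => ?_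
        split
        · rename_i hy; rw [hgY ω, hy]; ring
        · rw [zero_mul]
      · rename_i h; exact zero_fiber p hp Y y h (fun ω => g ω * g ω)
    have hCS : Egg ^ 2 ≤ A * Egg := by
      have h1 : ∀ y, (if 0 < P y then m y / Real.sqrt (P y) else 0)
          * (if 0 < P y then Real.sqrt (P y) * G y else 0)
          = (if 0 < P y then m y * G y else 0) := by
        intro y
        split
        · rename_i h
          have hs : Real.sqrt (P y) ≠ 0 := ne_of_gt (Real.sqrt_pos.mpr h)
          field_simp
        · rw [mul_zero]
      have h2 : ∀ y, (if 0 < P y then m y / Real.sqrt (P y) else 0) ^ 2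
          = (if 0 < P y then (m y) ^ 2 / P y else 0) := by
        intro y
        split
        · rename_i h; rw [div_pow, Real.sq_sqrt h.le]
        · rw [zero_pow two_ne_zero]
      have h3 : ∀ y, (if 0 < P y then Real.sqrt (P y) * G y else 0) ^ 2
          = (if 0 < P y then P y * (G y) ^ 2 else 0) := by
        intro y
        split
        · rename_i h; rw [mul_pow, Real.sq_sqrt h.le]
        · rw [zero_pow two_ne_zero]
      have := Finset.sum_mul_sq_le_sq_mul_sq (Finset.univ.image Y)
        (fun y => if 0 < P y then m y / Real.sqrt (P y) else 0)
        (fun y => if 0 < P y then Real.sqrt (P y) * G y else 0)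
      simp only [h1, h2, h3] at this
      calc Egg ^ 2 = (∑ ω, p ω * (f ω * g ω)) ^ 2 := by rw [heq]
        _ = (∑ y ∈ Finset.univ.image Y, (if 0 < P y then m y * G y else 0)) ^ 2 := by
            rw [hEfg]
        _ ≤ A * Egg := by rw [hAdef, hEgg]; exact this
    nlinarith [hCS, hEggnn, hA0]
  linarith

end auxlem

/-- **conditional variance vs. projections of SDP vectors.** Suppose the
vectors `v_{ia}` realize the second moments of the indicators, i.e.
`⟨v_{ia}, v_{jb}⟩ = E[X_{ia} X_{jb}]`. Let `S ⊆ [r]` and let `w_{ia} := P_S v_{ia}` be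
the orthogonal projection of `v_{ia}` onto the orthogonal complement of the span of
`{v_{jb} : j ∈ S, b ∈ [k]}` (characterized by `w_{ia} ⊥ span` and `v_{ia} − w_{ia} ∈ span`).
Then `E_{{X_S}} Var[X_{ia} | X_S] ≤ ‖w_{ia}‖²` and
`E_{{X_S}} Var[X_i | X_S] ≤ Σ_a ‖w_{ia}‖²`. -/
theorem stmt_13 {Ω : Type*} [Fintype Ω] (p : Ω → ℝ)
    (hp : ∀ ω, 0 ≤ p ω) (hsum : ∑ ω, p ω = 1)
    (r k : ℕ) (X : Fin r → Ω → Fin k)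
    {H : Type*} [NormedAddCommGroup H] [InnerProductSpace ℝ H]
    (v : Fin r → Fin k → H)
    (hgram : ∀ i j : Fin r, ∀ a b : Fin k,
      (⟪v i a, v j b⟫ : ℝ) = pExp p (fun ω => pInd (X i) a ω * pInd (X j) b ω))
    (S : Finset (Fin r))
    (w : Fin r → Fin k → H)
    (hw_perp : ∀ i a,
      w i a ∈ (Submodule.span ℝ {x : H | ∃ j ∈ S, ∃ b : Fin k, x = v j b})ᗮ)
    (hw_span : ∀ i a,
      v i a - w i a ∈ Submodule.span ℝ {x : H | ∃ j ∈ S, ∃ b : Fin k, x = v j b}) :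
    (∀ (i : Fin r) (a : Fin k),
        pCondVar p (pInd (X i) a) (fun ω => fun s : S => X s ω) ≤ ‖w i a‖ ^ 2) ∧
      ∀ i : Fin r,
        pCondVarK p (X i) (fun ω => fun s : S => X s ω) ≤ ∑ a, ‖w i a‖ ^ 2 := by
  have hone : ∀ (i : Fin r) (a : Fin k),
      pCondVar p (pInd (X i) a) (fun ω => fun s : S => X s ω) ≤ ‖w i a‖ ^ 2 := by
    intro i a
    set f := pInd (X i) a with hfdef
    set u := v i a - w i a with hudef
    obtain ⟨n, c, z, hz⟩ := Submodule.mem_span_set'.mp (hw_span i a)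
    rw [← hudef] at hz
    choose j hjS b hvb using fun t => (z t).2
    set g : Ω → ℝ := fun ω => ∑ t, c t * pInd (X (j t)) (b t) ω with hgdef
    set G : (S → Fin k) → ℝ :=
      fun y => ∑ t, c t * (if y ⟨j t, hjS t⟩ = b t then (1:ℝ) else 0) with hGdef
    have hgY : ∀ ω, g ω = G ((fun s : S => X s ω)) := by
      intro ω
      rfl
    have hwu : ⟪u, w i a⟫ = 0 :=
      (Submodule.mem_orthogonal _ _).mp (hw_perp i a) u (hw_span i a)
    have hv : v i a = w i a + u := by rw [hudef]; abel
    have hfg : ⟪v i a, u⟫ = ∑ ω, p ω * (f ω * g ω) := by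
      rw [← hz, inner_sum]
      have step : ∀ t : Fin n, ⟪v i a, c t • (z t : H)⟫
          = c t * ∑ ω, p ω * (f ω * pInd (X (j t)) (b t) ω) := by
        intro t
        rw [real_inner_smul_right, hvb t, hgram i (j t) a (b t)]
        rfl
      simp only [step]
      calc ∑ t, c t * ∑ ω, p ω * (f ω * pInd (X (j t)) (b t) ω)
          = ∑ t, ∑ ω, c t * (p ω * (f ω * pInd (X (j t)) (b t) ω)) := by
            simp only [Finset.mul_sum]
        _ = ∑ ω, ∑ t, c t * (p ω * (f ω * pInd (X (j t)) (b t) ω)) := Finset.sum_comm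
        _ = ∑ ω, p ω * (f ω * g ω) := by
            refine Finset.sum_congr rfl fun ω _ => ?_
            rw [hgdef]
            dsimp only
            rw [Finset.mul_sum, Finset.mul_sum]
            refine Finset.sum_congr rfl fun t _ => by ring
    have hgg : ⟪u, u⟫ = ∑ ω, p ω * (g ω * g ω) := by
      rw [← hz, sum_inner]
      have step : ∀ t : Fin n, ⟪c t • (z t : H), ∑ s, c s • (z s : H)⟫
          = ∑ s, c t * (c s * ∑ ω, p ω *
              (pInd (X (j t)) (b t) ω * pInd (X (j s)) (b s) ω)) := by
        intro t
        rw [inner_sum]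
        refine Finset.sum_congr rfl fun s _ => ?_
        rw [real_inner_smul_left, real_inner_smul_right, hvb t, hvb s,
          hgram (j t) (j s) (b t) (b s)]
        rw [pExp]
      simp only [step]
      calc ∑ t, ∑ s, c t * (c s * ∑ ω, p ω *
              (pInd (X (j t)) (b t) ω * pInd (X (j s)) (b s) ω))
          = ∑ t, ∑ s, ∑ ω, c t * (c s * (p ω *
              (pInd (X (j t)) (b t) ω * pInd (X (j s)) (b s) ω))) := by
            simp only [Finset.mul_sum]
        _ = ∑ ω, ∑ t, ∑ s, c t * (c s * (p ω *
              (pInd (X (j t)) (b t) ω * pInd (X (j s)) (b s) ω))) := by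
            rw [show (∑ t, ∑ s, ∑ ω, c t * (c s * (p ω *
              (pInd (X (j t)) (b t) ω * pInd (X (j s)) (b s) ω))))
              = ∑ t, ∑ ω, ∑ s, c t * (c s * (p ω *
              (pInd (X (j t)) (b t) ω * pInd (X (j s)) (b s) ω)))
              from Finset.sum_congr rfl fun t _ => Finset.sum_comm]
            exact Finset.sum_comm
        _ = ∑ ω, p ω * (g ω * g ω) := by
            refine Finset.sum_congr rfl fun ω _ => ?_
            rw [hgdef]
            dsimp only
            rw [Finset.sum_mul_sum]
            rw [Finset.mul_sum]
            refine Finset.sum_congr rfl fun t _ => ?_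
            rw [Finset.mul_sum]
            refine Finset.sum_congr rfl fun s _ => by ring
    have hwu2 : ⟪w i a, u⟫ = 0 := by rw [real_inner_comm]; exact hwu
    have hperp : ⟪v i a, u⟫ = ⟪u, u⟫ := by
      conv_lhs => rw [hv]
      rw [inner_add_left, hwu2, zero_add]
    have hff : ⟪v i a, v i a⟫ = ∑ ω, p ω * (f ω * f ω) := by
      rw [hgram i i a a]
      rfl
    have hnorm : ⟪v i a, v i a⟫ - ⟪u, u⟫ = ‖w i a‖ ^ 2 := by
      calc ⟪v i a, v i a⟫ - ⟪u, u⟫ = ‖w i a + u‖ ^ 2 - ‖u‖ ^ 2 := by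
            conv_lhs => rw [hv]
            rw [real_inner_self_eq_norm_sq, real_inner_self_eq_norm_sq]
        _ = ‖w i a‖ ^ 2 := by
            rw [norm_add_sq_real, hwu2]
            ring
    have hkey := keyineq p hp (fun ω => fun s : S => X s ω) f g G hgY
      (by rw [← hfg, ← hgg]; exact hperp)
    linarith [hkey, hff, hgg, hnorm]
  refine ⟨hone, fun i => ?_⟩
  rw [pCondVarK]
  exact Finset.sum_le_sum fun a _ => hone i a


end
end

section
/- Let X₁, …, Xₙ be jointly distributed random variables with values in {−1, 1} on a finite probability space such that Var X_i > 0 for every i. Then E_{j∈[n]} Var X_j − E_{i,j∈[n]} E_{{X_i}} Var[X_j | X_i] = E_{i,j∈[n]} Cov(X_i, X_j)² · (1/2)·(1/Var X_i + 1/Var X_j). -/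
open Finset

noncomputable section

variable {Ω : Type*} [Fintype Ω]

lemma pExp_split (p : Ω → ℝ) (g : Ω → ℝ) (hg : ∀ ω, g ω = 1 ∨ g ω = -1) (h : Ω → ℝ) :
    ∑ ω, h ω = (∑ ω, if g ω = 1 then h ω else 0) + (∑ ω, if g ω = -1 then h ω else 0) := by
  rw [← Finset.sum_add_distrib]
  refine Finset.sum_congr rfl fun ω _ => ?_
  rcases hg ω with h1 | h1 <;> rw [h1] <;> norm_num

lemma pCov_eq (p : Ω → ℝ) (hsum : ∑ ω, p ω = 1) (f g : Ω → ℝ) :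
    pCov p f g = pExp p (fun ω => f ω * g ω) - pExp p f * pExp p g := by
  have h : ∀ ω, p ω * ((f ω - pExp p f) * (g ω - pExp p g)) =
      p ω * (f ω * g ω) - pExp p g * (p ω * f ω) - pExp p f * (p ω * g ω)
        + pExp p f * pExp p g * p ω := fun ω => by ring
  simp only [pCov, pExp] at h ⊢
  rw [Finset.sum_congr rfl fun ω _ => h ω]
  simp [Finset.sum_add_distrib, Finset.sum_sub_distrib, ← Finset.mul_sum, hsum]
  ring

lemma pVar_eq (p : Ω → ℝ) (hsum : ∑ ω, p ω = 1) (f : Ω → ℝ) :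
    pVar p f = pExp p (fun ω => f ω ^ 2) - pExp p f ^ 2 := by
  have h : pVar p f = pCov p f f := by
    simp [pVar, pCov, pow_two]
  rw [h, pCov_eq p hsum]
  simp [pow_two]

lemma pExp_pCond (p : Ω → ℝ) (E : Ω → Prop) [DecidablePred E] (h : Ω → ℝ) :
    pExp (pCond p E) h = (∑ ω, if E ω then p ω * h ω else 0) / pProb p E := by
  simp only [pExp, pCond, Finset.sum_div]
  refine Finset.sum_congr rfl fun ω _ => ?_
  by_cases hE : E ω <;> simp [hE] <;> ring

lemma sum_pCond (p : Ω → ℝ) (E : Ω → Prop) [DecidablePred E] (hE : pProb p E ≠ 0) :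
    ∑ ω, pCond p E ω = 1 := by
  have h : ∀ ω, pCond p E ω = (if E ω then p ω else 0) / pProb p E := by
    intro ω; simp only [pCond]; split <;> simp
  rw [Finset.sum_congr rfl fun ω _ => h ω, ← Finset.sum_div]
  exact div_self hE

lemma pVar_pCond (p : Ω → ℝ) (E : Ω → Prop) [DecidablePred E] (hE : pProb p E ≠ 0) (f : Ω → ℝ) :
    pVar (pCond p E) f = (∑ ω, if E ω then p ω * f ω ^ 2 else 0) / pProb p E
      - ((∑ ω, if E ω then p ω * f ω else 0) / pProb p E) ^ 2 := by
  rw [pVar_eq _ (sum_pCond p E hE), pExp_pCond, pExp_pCond]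

lemma key_lemma (p : Ω → ℝ) (hp : ∀ ω, 0 ≤ p ω) (hsum : ∑ ω, p ω = 1)
    (g f : Ω → ℝ) (hg : ∀ ω, g ω = 1 ∨ g ω = -1) (hv : 0 < pVar p g) :
    pVar p f - pCondVar p f g = pCov p g f ^ 2 / pVar p g := by
  set q := pProb p (fun ω => g ω = 1) with hqdef
  set r := pProb p (fun ω => g ω = -1) with hrdef
  have hq0 : 0 ≤ q := Finset.sum_nonneg fun ω _ => by
    dsimp only; split
    · exact hp ω
    · exact le_rfl
  have hr0 : 0 ≤ r := Finset.sum_nonneg fun ω _ => by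
    dsimp only; split
    · exact hp ω
    · exact le_rfl
  have hqr : q + r = 1 := by
    rw [hqdef, hrdef]; simp only [pProb]
    rw [← pExp_split p g hg p, hsum]
  have hg2 : pExp p (fun ω => g ω ^ 2) = 1 := by
    rw [← hsum]; exact Finset.sum_congr rfl fun ω _ => by rcases hg ω with h | h <;> simp only [h] <;> norm_num
  have hEg : pExp p g = q - r := by
    rw [hqdef, hrdef]; simp only [pProb, pExp]
    rw [← Finset.sum_sub_distrib]
    exact Finset.sum_congr rfl fun ω _ => by rcases hg ω with h | h <;> simp only [h] <;> norm_num
  have hvarg : pVar p g = 4 * q * r := by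
    rw [pVar_eq p hsum, hg2, hEg]; nlinarith [hqr]
  have h4 : 0 < 4 * q * r := hvarg ▸ hv
  have hq : 0 < q := by nlinarith
  have hr : 0 < r := by nlinarith
  have hq' : q ≠ 0 := ne_of_gt hq
  have hr' : r ≠ 0 := ne_of_gt hr
  set S := ∑ ω, if g ω = 1 then p ω * f ω else 0 with hSdef
  set T := ∑ ω, if g ω = -1 then p ω * f ω else 0 with hTdef
  set S' := ∑ ω, if g ω = 1 then p ω * f ω ^ 2 else 0 with hS'def
  set T' := ∑ ω, if g ω = -1 then p ω * f ω ^ 2 else 0 with hT'def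
  have hSf : pExp p f = S + T := pExp_split p g hg _
  have hS'f : pExp p (fun ω => f ω ^ 2) = S' + T' := pExp_split p g hg _
  have hgf : pExp p (fun ω => g ω * f ω) = S - T := by
    simp only [pExp, hSdef, hTdef]
    rw [← Finset.sum_sub_distrib]
    refine Finset.sum_congr rfl fun ω _ => ?_
    rcases hg ω with h | h <;> simp only [h] <;> norm_num
  have hcov : pCov p g f = (S - T) - (q - r) * (S + T) := by
    rw [pCov_eq p hsum, hgf, hEg, hSf]
  have hvarf : pVar p f = (S' + T') - (S + T) ^ 2 := by
    rw [pVar_eq p hsum, hS'f, hSf]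
  have hcv : pCondVar p f g = q * (S' / q - (S / q) ^ 2) + r * (T' / r - (T / r) ^ 2) := by
    have hsub : Finset.univ.image g ⊆ ({1, -1} : Finset ℝ) := by
      intro y hy
      simp only [Finset.mem_image] at hy
      obtain ⟨ω, _, rfl⟩ := hy
      rcases hg ω with h | h <;> simp [h]
    rw [pCondVar, Finset.sum_subset hsub ?_]
    · rw [Finset.sum_pair (by norm_num : (1:ℝ) ≠ -1)]
      rw [if_pos (show 0 < pProb p (fun ω => g ω = 1) from hq),
        if_pos (show 0 < pProb p (fun ω => g ω = -1) from hr),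
        pVar_pCond p _ hq', pVar_pCond p _ hr']
    · intro y _ hy
      simp only [Finset.mem_image, mem_univ, true_and, not_exists] at hy
      have h0 : pProb p (fun ω => g ω = y) = 0 := by
        simp only [pProb]
        exact Finset.sum_eq_zero fun ω _ => if_neg (hy ω)
      rw [h0]
      simp
  rw [hvarf, hcv, hcov, hvarg]
  have hrq : r = 1 - q := by linarith
  have h1q : (1:ℝ) - q ≠ 0 := hrq ▸ hr'
  rw [hrq]
  field_simp
  ring



/-- For jointly distributed `{−1,1}`-valued random variables
`X₁, …, Xₙ` with positive variances, the expected decrease in average variance upon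
conditioning on a random variable equals the average of
`Cov(X_i, X_j)²·½(1/Var X_i + 1/Var X_j)`. -/
theorem stmt_16 {Ω : Type*} [Fintype Ω] (p : Ω → ℝ)
    (hp : ∀ ω, 0 ≤ p ω) (hsum : ∑ ω, p ω = 1)
    (n : ℕ) (hn : 0 < n) (X : Fin n → Ω → ℝ)
    (hpm : ∀ i ω, X i ω = 1 ∨ X i ω = -1)
    (hvar : ∀ i, 0 < pVar p (X i)) :
    (1 / (n : ℝ)) * ∑ j, pVar p (X j) -
        (1 / (n : ℝ) ^ 2) * ∑ i, ∑ j, pCondVar p (X j) (X i) =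
      (1 / (n : ℝ) ^ 2) * ∑ i, ∑ j,
        pCov p (X i) (X j) ^ 2 * ((1 / 2) * (1 / pVar p (X i) + 1 / pVar p (X j))) := by
  have hn' : (n : ℝ) ≠ 0 := Nat.cast_ne_zero.mpr hn.ne'
  have key : ∀ i j, pVar p (X j) - pCondVar p (X j) (X i) =
      pCov p (X i) (X j) ^ 2 / pVar p (X i) :=
    fun i j => key_lemma p hp hsum (X i) (X j) (hpm i) (hvar i)
  have covsymm : ∀ i j, pCov p (X i) (X j) = pCov p (X j) (X i) := by
    intro i j
    simp only [pCov, pExp]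
    exact Finset.sum_congr rfl fun ω _ => by ring
  have hR : ∑ i, ∑ j, pCov p (X i) (X j) ^ 2 *
        ((1 / 2) * (1 / pVar p (X i) + 1 / pVar p (X j))) =
      ∑ i, ∑ j, pCov p (X i) (X j) ^ 2 / pVar p (X i) := by
    have hsplit : ∀ i j : Fin n, pCov p (X i) (X j) ^ 2 *
        ((1 / 2) * (1 / pVar p (X i) + 1 / pVar p (X j))) =
        pCov p (X i) (X j) ^ 2 * ((1 / 2) * (1 / pVar p (X i))) +
        pCov p (X i) (X j) ^ 2 * ((1 / 2) * (1 / pVar p (X j))) := fun i j => by ring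
    have h1 : ∑ i, ∑ j, pCov p (X i) (X j) ^ 2 * ((1 / 2) * (1 / pVar p (X j))) =
        ∑ i, ∑ j, pCov p (X i) (X j) ^ 2 * ((1 / 2) * (1 / pVar p (X i))) := by
      rw [Finset.sum_comm]
      exact Finset.sum_congr rfl fun i _ => Finset.sum_congr rfl fun j _ => by
        rw [covsymm]
    calc ∑ i, ∑ j, pCov p (X i) (X j) ^ 2 *
          ((1 / 2) * (1 / pVar p (X i) + 1 / pVar p (X j)))
        = ∑ i, ∑ j, (pCov p (X i) (X j) ^ 2 * ((1 / 2) * (1 / pVar p (X i))) +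
            pCov p (X i) (X j) ^ 2 * ((1 / 2) * (1 / pVar p (X j)))) :=
          Finset.sum_congr rfl fun i _ => Finset.sum_congr rfl fun j _ => hsplit i j
      _ = (∑ i, ∑ j, pCov p (X i) (X j) ^ 2 * ((1 / 2) * (1 / pVar p (X i)))) +
            ∑ i, ∑ j, pCov p (X i) (X j) ^ 2 * ((1 / 2) * (1 / pVar p (X j))) := by
          simp [Finset.sum_add_distrib]
      _ = ∑ i, ∑ j, pCov p (X i) (X j) ^ 2 / pVar p (X i) := by
          rw [h1, ← Finset.sum_add_distrib]
          refine Finset.sum_congr rfl fun i _ => ?_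
          rw [← Finset.sum_add_distrib]
          exact Finset.sum_congr rfl fun j _ => by ring
  have hkeysum : ∑ i, ∑ j, pCov p (X i) (X j) ^ 2 / pVar p (X i) =
      ∑ i, ∑ j, (pVar p (X j) - pCondVar p (X j) (X i)) :=
    Finset.sum_congr rfl fun i _ => Finset.sum_congr rfl fun j _ => (key i j).symm
  rw [hR, hkeysum]
  have hL : ∑ i : Fin n, ∑ j, (pVar p (X j) - pCondVar p (X j) (X i)) =
      (n : ℝ) * ∑ j, pVar p (X j) - ∑ i, ∑ j, pCondVar p (X j) (X i) := by
    simp only [Finset.sum_sub_distrib]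
    congr 1
    rw [Finset.sum_const, Finset.card_univ, Fintype.card_fin, nsmul_eq_mul]
  rw [hL]
  field_simp

end
end

section
/- Let G be a regular weighted constraint graph on vertex set V = [n] with normalized adjacency matrix A (symmetric and doubly stochastic), together with a permutation π_{ij} of [k] for each pair (i,j) with A_{ij} > 0 satisfying π_{ji} = π_{ij}⁻¹. Let v_{ia} (for i ∈ V, a ∈ [k]) be vectors in a real inner product space H such that: for every i, the vectors {v_{ia}}_{a∈[k]} are pairwise orthogonal and Σ_{a∈[k]} ‖v_{ia}‖² = 1; and ⟨v_{ia}, v_{jb}⟩ ≥ 0 for all i, j, a, b. Let P be an orthogonal projection of H and set u_{ia} := P v_{ia}; assume additionally that ⟨v_{ia} − u_{ia}, v_{jb} − u_{jb}⟩ ≥ 0 for all i, j, a, b. Let w_{ia} (for i ∈ V, a ∈ [k]) be any vectors in a real inner product space satisfying ⟨w_{ia}, w_{jb}⟩ = ‖u_{ia}‖·‖u_{jb}‖·⟨ū_{ia}, ū_{jb}⟩²·⟨v̄_{ia}, v̄_{jb}⟩ for all i, j, a, b (where x̄ := x/‖x‖, and any factor involving a zero vector is interpreted as 0), and set U_i :=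 Σ_{a∈[k]} w_{ia}. If E_{ij∼G} Σ_{a∈[k]} ‖v_{ia} − v_{j,π_{ij}(a)}‖² ≤ η, then E_{ij∼G} ‖U_i − U_j‖² ≤ 3η. -/
open Finset RealInnerProductSpace

noncomputable section

set_option maxHeartbeats 1000000 in

lemma key_ineq {H : Type*} [NormedAddCommGroup H] [InnerProductSpace ℝ H]
    (P : H →L[ℝ] H)
    (hPsa : ∀ x y : H, (⟪P x, y⟫ : ℝ) = ⟪x, P y⟫)
    (hPidem : ∀ x : H, P (P x) = P x)
    (x y : H) (hb : 0 ≤ (⟪x, y⟫ : ℝ))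
    (hr : 0 ≤ (⟪x - P x, y - P y⟫ : ℝ)) :
    ‖P x‖ ^ 2 + ‖P y‖ ^ 2 -
      2 * (‖P x‖ * ‖P y‖ * (⟪‖P x‖⁻¹ • P x, ‖P y‖⁻¹ • P y⟫ : ℝ) ^ 2 *
        (⟪‖x‖⁻¹ • x, ‖y‖⁻¹ • y⟫ : ℝ)) ≤ 3 * ‖x - y‖ ^ 2 := by
  set s := ‖P x‖ with hs
  set t := ‖P y‖ with ht
  set nv := ‖x‖ with hnv
  set nw := ‖y‖ with hnw
  set a : ℝ := ⟪P x, P y⟫ with hadef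
  set b : ℝ := ⟪x, y⟫ with hbdef
  have hs0 : 0 ≤ s := norm_nonneg _
  have ht0 : 0 ≤ t := norm_nonneg _
  have hnv0 : 0 ≤ nv := norm_nonneg _
  have hnw0 : 0 ≤ nw := norm_nonneg _
  have hsm1 : (⟪‖P x‖⁻¹ • P x, ‖P y‖⁻¹ • P y⟫ : ℝ) = s⁻¹ * (t⁻¹ * a) := by
    rw [real_inner_smul_left, real_inner_smul_right]
  have hsm2 : (⟪‖x‖⁻¹ • x, ‖y‖⁻¹ • y⟫ : ℝ) = nv⁻¹ * (nw⁻¹ * b) := by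
    rw [real_inner_smul_left, real_inner_smul_right]
  rw [hsm1, hsm2]
  have hPP : ∀ z w : H, (⟪P z, P w⟫ : ℝ) = ⟪z, P w⟫ := by
    intro z w; rw [hPsa, hPidem]
  have hcontr : ∀ z : H, ‖P z‖ ≤ ‖z‖ := by
    intro z
    have h1 : (⟪P z, P z⟫ : ℝ) = ⟪z, P z⟫ := hPP z z
    have h2 : (⟪z, P z⟫ : ℝ) ≤ ‖z‖ * ‖P z‖ := real_inner_le_norm z (P z)
    have h3 : (⟪P z, P z⟫ : ℝ) = ‖P z‖ ^ 2 := real_inner_self_eq_norm_sq _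
    rcases eq_or_lt_of_le (norm_nonneg (P z)) with h | h
    · rw [← h]; exact norm_nonneg z
    · nlinarith
  have h6s : s ≤ nv := hcontr x
  have h6t : t ≤ nw := hcontr y
  have hab : a ≤ b := by
    have hexp : (⟪x - P x, y - P y⟫ : ℝ) = b - a := by
      rw [inner_sub_left, inner_sub_right, inner_sub_right]
      have e2 : (⟪x, P y⟫ : ℝ) = a := (hPP x y).symm
      have e1 : (⟪P x, y⟫ : ℝ) = a := by rw [hPsa, e2]
      have e3 : (⟪P x, P y⟫ : ℝ) = a := rfl
      rw [e1, e2, e3, hbdef]; ring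
    rw [hexp] at hr; linarith
  have h5 : |a| ≤ s * t := abs_real_inner_le_norm _ _
  have h4 : b ≤ nv * nw := real_inner_le_norm _ _
  have hδ : ‖x - y‖ ^ 2 = nv ^ 2 + nw ^ 2 - 2 * b := by
    rw [@norm_sub_sq_real]; ring
  set δ := ‖x - y‖ ^ 2 with hδdef
  have hδ0 : 0 ≤ δ := sq_nonneg _
  -- contraction applied to x - y
  have h1 : s ^ 2 + t ^ 2 - 2 * a ≤ δ := by
    have e : P x - P y = P (x - y) := (map_sub P x y).symm
    have e2 : ‖P x - P y‖ ^ 2 = s ^ 2 + t ^ 2 - 2 * a := by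
      rw [@norm_sub_sq_real]; ring
    have e3 : ‖P (x - y)‖ ≤ ‖x - y‖ := hcontr (x - y)
    have e4 : ‖P x - P y‖ ^ 2 ≤ ‖x - y‖ ^ 2 := by
      rw [e]; exact pow_le_pow_left₀ (norm_nonneg _) e3 2
    rw [e2] at e4; exact e4
  -- case s = 0 or t = 0
  by_cases hsz : s = 0
  · have haz : a = 0 := by
      have : P x = 0 := norm_eq_zero.mp hsz
      rw [hadef, this, inner_zero_left]
    rw [hsz] at h1 ⊢
    rw [haz] at h1
    nlinarith [sq_nonneg (t⁻¹ * a), mul_nonneg (mul_nonneg (mul_nonneg (inv_nonneg.mpr hnv0) (inv_nonneg.mpr hnw0)) hb) (sq_nonneg (0⁻¹ * (t⁻¹ * a)))]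
  by_cases htz : t = 0
  · have haz : a = 0 := by
      have : P y = 0 := norm_eq_zero.mp htz
      rw [hadef, this, inner_zero_right]
    rw [htz] at h1 ⊢
    rw [haz] at h1
    nlinarith [mul_nonneg (mul_nonneg (inv_nonneg.mpr hnv0) (inv_nonneg.mpr hnw0)) hb]
  -- main case
  have hs1 : 0 < s := lt_of_le_of_ne hs0 (Ne.symm hsz)
  have ht1 : 0 < t := lt_of_le_of_ne ht0 (Ne.symm htz)
  have hnv1 : 0 < nv := lt_of_lt_of_le hs1 h6s
  have hnw1 : 0 < nw := lt_of_lt_of_le ht1 h6t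
  set α := a / (s * t) with hαdef
  set β := b / (nv * nw) with hβdef
  have ha' : a = s * t * α := by rw [hαdef]; field_simp
  have hb' : b = nv * nw * β := by rw [hβdef]; field_simp
  have hT : s * t * (s⁻¹ * (t⁻¹ * a)) ^ 2 * (nv⁻¹ * (nw⁻¹ * b)) = s * t * α ^ 2 * β := by
    rw [hαdef, hβdef]; field_simp
  rw [hT]
  have hα1 : α ≤ 1 := by
    rw [hαdef, div_le_one (by positivity)]
    calc a ≤ |a| := le_abs_self a
    _ ≤ s * t := h5
  have hβ0 : 0 ≤ β := div_nonneg hb (by positivity)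
  have hβ1 : β ≤ 1 := by
    rw [hβdef, div_le_one (by positivity)]; exact h4
  by_cases hα0 : α ≤ 0
  · -- a ≤ 0 case: the subtracted term is nonnegative
    have hT0 : 0 ≤ s * t * α ^ 2 * β := by positivity
    have haneg : a ≤ 0 := by
      rw [ha']; exact mul_nonpos_of_nonneg_of_nonpos (by positivity) hα0
    linarith [hT0, haneg, h1, hδ0]
  push_neg at hα0
  have p1 : s ^ 2 + t ^ 2 - 2 * (s * t * α) ≤ δ := by rw [← ha']; exact h1
  have hstnv : s * t ≤ nv * nw := mul_le_mul h6s h6t ht0 hnv0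
  have p2 : s * t * α * (1 - β) ≤ nv * nw * (1 - β) := by
    apply mul_le_mul_of_nonneg_right _ (by linarith)
    calc s * t * α ≤ s * t * 1 := mul_le_mul_of_nonneg_left hα1 (by positivity)
    _ ≤ nv * nw := by linarith [hstnv]
  have p3 : 2 * (nv * nw * (1 - β)) ≤ δ := by
    rw [hδ, hb']
    have hsq : 0 ≤ nv ^ 2 - 2 * (nv * nw) + nw ^ 2 := by
      nlinarith [sq_nonneg (nv - nw)]
    linarith
  have p4 : s * t * α * β * (1 - α) ≤ s * t * (1 - α) := by
    apply mul_le_mul_of_nonneg_right _ (by linarith)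
    have q1 : s * t * α * β ≤ s * t * α * 1 := mul_le_mul_of_nonneg_left hβ1 (by positivity)
    have q2 : s * t * α ≤ s * t * 1 := mul_le_mul_of_nonneg_left hα1 (by positivity)
    linarith
  have p5 : 2 * (s * t * (1 - α)) ≤ δ := by
    have hsq : 0 ≤ s ^ 2 - 2 * (s * t) + t ^ 2 := by
      nlinarith [sq_nonneg (s - t)]
    linarith [p1]
  have hid : s ^ 2 + t ^ 2 - 2 * (s * t * α ^ 2 * β) =
      (s ^ 2 + t ^ 2 - 2 * (s * t * α)) + 2 * (s * t * α * (1 - β))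
        + 2 * (s * t * α * β * (1 - α)) := by ring
  linarith [p1, p2, p3, p4, p5]

/-- **high local correlation, Lemma `highlocalcorrelation`.** Let `A` be
the normalized adjacency matrix of a regular weighted constraint graph with permutations
`π_{ij}` on the edges satisfying `π_{ji} = π_{ij}⁻¹`. Let `v_{ia}` be SDP vectors that
are orthogonal across labels for each vertex, with `Σ_a ‖v_{ia}‖² = 1` and pairwise
nonnegative inner products. Let `P` be an orthogonal projection, `u_{ia} := P v_{ia}`,
assume `⟨v_{ia} − u_{ia}, v_{jb} − u_{jb}⟩ ≥ 0`, and let `w_{ia}` be vectors whose Gram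
matrix is `‖u_{ia}‖·‖u_{jb}‖·⟨ū_{ia}, ū_{jb}⟩²·⟨v̄_{ia}, v̄_{jb}⟩` (zero factors are `0`;
in Lean `‖0‖⁻¹ • 0 = 0` yields this convention). Set `U_i := Σ_a w_{ia}`. If the SDP
solution has value `1 − η`, i.e. `E_{ij∼G} Σ_a ‖v_{ia} − v_{j,π_{ij}(a)}‖² ≤ η`, then
`E_{ij∼G} ‖U_i − U_j‖² ≤ 3η`. -/
theorem stmt_18 {n k : ℕ} (hn : 0 < n)
    (A : Matrix (Fin n) (Fin n) ℝ) (hA : A.IsHermitian)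
    (hnonneg : ∀ i j, 0 ≤ A i j) (hrow : ∀ i, ∑ j, A i j = 1)
    (π : Fin n → Fin n → Equiv.Perm (Fin k))
    (hπ : ∀ i j, 0 < A i j → π j i = (π i j)⁻¹)
    {H : Type*} [NormedAddCommGroup H] [InnerProductSpace ℝ H]
    (v : Fin n → Fin k → H)
    (horth : ∀ i, ∀ a b : Fin k, a ≠ b → (⟪v i a, v i b⟫ : ℝ) = 0)
    (hnorm : ∀ i, ∑ a, ‖v i a‖ ^ 2 = 1)
    (hpos : ∀ i j a b, 0 ≤ (⟪v i a, v j b⟫ : ℝ))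
    (P : H →L[ℝ] H)
    (hPsa : ∀ x y : H, (⟪P x, y⟫ : ℝ) = ⟪x, P y⟫)
    (hPidem : ∀ x : H, P (P x) = P x)
    (hres : ∀ i j a b, 0 ≤ (⟪v i a - P (v i a), v j b - P (v j b)⟫ : ℝ))
    {H' : Type*} [NormedAddCommGroup H'] [InnerProductSpace ℝ H']
    (w : Fin n → Fin k → H')
    (hw : ∀ i j a b,
      (⟪w i a, w j b⟫ : ℝ) =
        ‖P (v i a)‖ * ‖P (v j b)‖ *
          (⟪‖P (v i a)‖⁻¹ • P (v i a), ‖P (v j b)‖⁻¹ • P (v j b)⟫ : ℝ) ^ 2 *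
          (⟪‖v i a‖⁻¹ • v i a, ‖v j b‖⁻¹ • v j b⟫ : ℝ))
    (η : ℝ)
    (hval : (1 / (n : ℝ)) * ∑ i, ∑ j, A i j * ∑ a, ‖v i a - v j (π i j a)‖ ^ 2 ≤ η) :
    (1 / (n : ℝ)) * ∑ i, ∑ j, A i j * ‖(∑ a, w i a) - ∑ a, w j a‖ ^ 2 ≤ 3 * η := by
  have hinv : (0:ℝ) ≤ 1 / (n : ℝ) := by positivity
  -- nonnegativity of Gram entries
  have hwnn : ∀ i j a b, 0 ≤ (⟪w i a, w j b⟫ : ℝ) := by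
    intro i j a b
    rw [hw]
    have hY : 0 ≤ (⟪‖v i a‖⁻¹ • v i a, ‖v j b‖⁻¹ • v j b⟫ : ℝ) := by
      rw [real_inner_smul_left, real_inner_smul_right]
      exact mul_nonneg (inv_nonneg.mpr (norm_nonneg _))
        (mul_nonneg (inv_nonneg.mpr (norm_nonneg _)) (hpos i j a b))
    exact mul_nonneg (by positivity) hY
  -- diagonal Gram entries
  have hdiag : ∀ i a, (⟪w i a, w i a⟫ : ℝ) = ‖P (v i a)‖ ^ 2 := by
    intro i a
    rw [hw]
    by_cases h0 : P (v i a) = 0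
    · simp [h0]
    · have hv0 : v i a ≠ 0 := by
        intro h; exact h0 (by rw [h, map_zero])
      have h1 : (⟪‖P (v i a)‖⁻¹ • P (v i a), ‖P (v i a)‖⁻¹ • P (v i a)⟫ : ℝ) = 1 := by
        rw [real_inner_smul_left, real_inner_smul_right, real_inner_self_eq_norm_sq]
        have : ‖P (v i a)‖ ≠ 0 := norm_ne_zero_iff.mpr h0
        field_simp
      have h2 : (⟪‖v i a‖⁻¹ • v i a, ‖v i a‖⁻¹ • v i a⟫ : ℝ) = 1 := by
        rw [real_inner_smul_left, real_inner_smul_right, real_inner_self_eq_norm_sq]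
        have : ‖v i a‖ ≠ 0 := norm_ne_zero_iff.mpr hv0
        field_simp
      rw [h1, h2]; ring
  -- off-diagonal (same vertex) Gram entries vanish
  have hoff : ∀ i, ∀ a b : Fin k, a ≠ b → (⟪w i a, w i b⟫ : ℝ) = 0 := by
    intro i a b hab
    rw [hw]
    have hz : (⟪‖v i a‖⁻¹ • v i a, ‖v i b‖⁻¹ • v i b⟫ : ℝ) = 0 := by
      rw [real_inner_smul_left, real_inner_smul_right, horth i a b hab]; ring
    rw [hz]; ring
  -- squared norm of U_i
  have hXX : ∀ i, (⟪(∑ a, w i a), (∑ a, w i a)⟫ : ℝ) = ∑ a, ‖P (v i a)‖ ^ 2 := by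
    intro i
    rw [sum_inner]
    refine Finset.sum_congr rfl fun a _ => ?_
    rw [inner_sum, Finset.sum_eq_single a]
    · exact hdiag i a
    · intro b _ hba; exact hoff i a b (fun h => hba h.symm)
    · intro h; exact absurd (Finset.mem_univ a) h
  -- cross term lower bound via nonnegativity
  have hXY : ∀ i j, ∑ a, (⟪w i a, w j (π i j a)⟫ : ℝ) ≤ ⟪(∑ a, w i a), (∑ a, w j a)⟫ := by
    intro i j
    rw [sum_inner]
    refine Finset.sum_le_sum fun a _ => ?_
    rw [inner_sum]
    exact Finset.single_le_sum (fun b _ => hwnn i j a b) (Finset.mem_univ (π i j a))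
  -- edge-level bound
  have hedge : ∀ i j, ‖(∑ a, w i a) - ∑ a, w j a‖ ^ 2 ≤
      3 * ∑ a, ‖v i a - v j (π i j a)‖ ^ 2 := by
    intro i j
    have hexp : ‖(∑ a, w i a) - ∑ a, w j a‖ ^ 2 =
        (⟪(∑ a, w i a), (∑ a, w i a)⟫ : ℝ) - 2 * ⟪(∑ a, w i a), (∑ a, w j a)⟫ +
          ⟪(∑ a, w j a), (∑ a, w j a)⟫ := by
      rw [@norm_sub_sq_real, real_inner_self_eq_norm_sq, real_inner_self_eq_norm_sq]
    have hperm : ∑ a, ‖P (v j a)‖ ^ 2 = ∑ a, ‖P (v j (π i j a))‖ ^ 2 :=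
      (Equiv.sum_comp (π i j) (fun b => ‖P (v j b)‖ ^ 2)).symm
    have hterm : ∀ a, ‖P (v i a)‖ ^ 2 + ‖P (v j (π i j a))‖ ^ 2 -
        2 * (⟪w i a, w j (π i j a)⟫ : ℝ) ≤ 3 * ‖v i a - v j (π i j a)‖ ^ 2 := by
      intro a
      rw [hw]
      exact key_ineq P hPsa hPidem _ _ (hpos i j a (π i j a)) (hres i j a (π i j a))
    have hsum := Finset.sum_le_sum (fun a (_ : a ∈ Finset.univ) => hterm a)
    have e1 : ∑ a, (‖P (v i a)‖ ^ 2 + ‖P (v j (π i j a))‖ ^ 2 -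
        2 * (⟪w i a, w j (π i j a)⟫ : ℝ)) =
        (∑ a, ‖P (v i a)‖ ^ 2) + (∑ a, ‖P (v j (π i j a))‖ ^ 2) -
          2 * ∑ a, (⟪w i a, w j (π i j a)⟫ : ℝ) := by
      rw [Finset.sum_sub_distrib, Finset.sum_add_distrib, Finset.mul_sum]
    have e2 : ∑ a, 3 * ‖v i a - v j (π i j a)‖ ^ 2 =
        3 * ∑ a, ‖v i a - v j (π i j a)‖ ^ 2 := (Finset.mul_sum _ _ _).symm
    rw [e1, e2] at hsum
    have hxy := hXY i j
    rw [hexp, hXX i, hXX j, hperm]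
    linarith
  -- sum up
  have hsum2 : ∑ i, ∑ j, A i j * ‖(∑ a, w i a) - ∑ a, w j a‖ ^ 2 ≤
      ∑ i, ∑ j, A i j * (3 * ∑ a, ‖v i a - v j (π i j a)‖ ^ 2) :=
    Finset.sum_le_sum fun i _ => Finset.sum_le_sum fun j _ =>
      mul_le_mul_of_nonneg_left (hedge i j) (hnonneg i j)
  have heq : ∑ i, ∑ j, A i j * (3 * ∑ a, ‖v i a - v j (π i j a)‖ ^ 2) =
      3 * ∑ i, ∑ j, A i j * ∑ a, ‖v i a - v j (π i j a)‖ ^ 2 := by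
    rw [Finset.mul_sum]
    refine Finset.sum_congr rfl fun i _ => ?_
    rw [Finset.mul_sum]
    exact Finset.sum_congr rfl fun j _ => by ring
  rw [heq] at hsum2
  calc (1 / (n : ℝ)) * ∑ i, ∑ j, A i j * ‖(∑ a, w i a) - ∑ a, w j a‖ ^ 2
      ≤ (1 / (n : ℝ)) * (3 * ∑ i, ∑ j, A i j * ∑ a, ‖v i a - v j (π i j a)‖ ^ 2) :=
        mul_le_mul_of_nonneg_left hsum2 hinv
    _ = 3 * ((1 / (n : ℝ)) * ∑ i, ∑ j, A i j * ∑ a, ‖v i a - v j (π i j a)‖ ^ 2) := by ring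
    _ ≤ 3 * η := by linarith

end
end
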